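/- For every graph G ∈ G_xy, g^+(G) ≤ g_a(G) + 1. (Consequently the parameters g_a and g^+ are 1-separated, by ε + θ.) -/

import Mathlib

open scoped Classical

/-- A finite simple graph with vertex labels in `ℕ`. -/
structure FinGraph where
  verts : Finset ℕ
  edges : Finset (Sym2 ℕ)
  edge_sub : ∀ e ∈ edges, ∀ v ∈ e, v ∈ verts
  loopless : ∀ e ∈ edges, ¬ e.IsDiag

namespace FinGraph

/-- Adjacency. -/
def Adj (G : FinGraph) (u v : ℕ) : Prop := s(u, v) ∈ G.edges

/-- Reachability by walks. -/
def Reach (G : FinGraph) : ℕ → ℕ → Prop := Relation.ReflTransGen G.Adj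

/-- A graph is connected if it is nonempty and every two vertices are joined by a walk. -/
def Connected (G : FinGraph) : Prop :=
  G.verts.Nonempty ∧ ∀ u ∈ G.verts, ∀ v ∈ G.verts, G.Reach u v

/-- Number of connected components. -/
noncomputable def compCount (G : FinGraph) : ℕ :=
  Set.ncard {S : Set ℕ | ∃ v ∈ G.verts, S = {u | G.Reach v u}}

/-- Darts (directed edges). -/
def darts (G : FinGraph) : Set (ℕ × ℕ) := {p | s(p.1, p.2) ∈ G.edges}

/-- Number of isolated vertices. -/
noncomputable def isolCount (G : FinGraph) : ℕ :=
  (G.verts.filter (fun v => ∀ e ∈ G.edges, v ∉ e)).card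

end FinGraph

/-- An orientable combinatorial embedding of `G`, given by a rotation system:
a permutation of the darts that fixes sources and is a single cycle on the darts
leaving each vertex (the local rotation). -/
structure Rot (G : FinGraph) where
  r : ℕ × ℕ → ℕ × ℕ
  bij : Set.BijOn r G.darts G.darts
  fix : ∀ d ∈ G.darts, (r d).1 = d.1
  cyc : ∀ d ∈ G.darts, ∀ d' ∈ G.darts, d.1 = d'.1 → ∃ n : ℕ, r^[n] d = d'

/-- The face-tracing map: follow an edge, then turn by the rotation. -/
def faceMap {G : FinGraph} (R : Rot G) : ℕ × ℕ → ℕ × ℕ := fun d => R.r (d.2, d.1)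

/-- The number of faces of an embedding: orbits of the face-tracing map together with
one face for each isolated vertex. -/
noncomputable def faceCount {G : FinGraph} (R : Rot G) : ℕ :=
  Set.ncard {S : Set (ℕ × ℕ) | ∃ d ∈ G.darts, S = {d' | ∃ n : ℕ, (faceMap R)^[n] d = d'}}
    + G.isolCount

/-- Twice the genus of the embedding `R`, by the Euler formula `2g = 2c - n + m - f`
(summed over the `c` connected components). -/
noncomputable def eulerVal (G : FinGraph) (R : Rot G) : ℤ :=
  2 * G.compCount - G.verts.card + G.edges.card - faceCount R

/-- The (orientable) genus of a graph: minimum genus of an embedding. -/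
noncomputable def FinGraph.genus (G : FinGraph) : ℕ :=
  sInf {k : ℕ | ∃ R : Rot G, 2 * (k : ℤ) = eulerVal G R}

/-- A minor-operation: an (ordered) edge together with a flag,
`false` = deletion, `true` = contraction (of the second vertex into the first). -/
abbrev Op := (ℕ × ℕ) × Bool

namespace FinGraph

/-- Deletion of the edge `ab`. -/
def del (G : FinGraph) (a b : ℕ) : FinGraph where
  verts := G.verts
  edges := G.edges.erase s(a, b)
  edge_sub := fun e he => G.edge_sub e (Finset.mem_of_mem_erase he)
  loopless := fun e he => G.loopless e (Finset.mem_of_mem_erase he)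

/-- Contraction of the edge `ab`: the vertex `b` is identified with `a`
(arising multiple edges are simplified, loops are discarded). -/
def con (G : FinGraph) (a b : ℕ) : FinGraph where
  verts := insert a (G.verts.erase b)
  edges := (G.edges.image (Sym2.map (fun w => if w = b then a else w))).filter
      (fun e => ¬ e.IsDiag)
  edge_sub := by
    intro e he v hv
    rcases Finset.mem_image.mp (Finset.mem_filter.mp he).1 with ⟨e0, he0, rfl⟩
    rcases Sym2.mem_map.mp hv with ⟨w, hw, hwv⟩
    by_cases hwb : w = b
    · simp only [hwb, if_pos rfl] at hwv
      exact hwv ▸ Finset.mem_insert_self _ _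
    · simp only [if_neg hwb] at hwv
      exact hwv ▸ Finset.mem_insert_of_mem
        (Finset.mem_erase.mpr ⟨hwb, G.edge_sub e0 he0 w hw⟩)
  loopless := fun e he => (Finset.mem_filter.mp he).2

/-- Applying a minor-operation to a graph. -/
def apply (G : FinGraph) (μ : Op) : FinGraph :=
  bif μ.2 then G.con μ.1.1 μ.1.2 else G.del μ.1.1 μ.1.2

/-- The set of minor-operations available for a graph (without terminals). -/
def ops (G : FinGraph) : Set Op := {μ | s(μ.1.1, μ.1.2) ∈ G.edges}

/-- `G` is minor-tight on a set `E0` of its edges if every minor-operation on an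
edge of `E0` decreases the genus of `G`. -/
def MinorTightOn (G : FinGraph) (E0 : Finset (Sym2 ℕ)) : Prop :=
  ∀ μ ∈ G.ops, s(μ.1.1, μ.1.2) ∈ E0 → (G.apply μ).genus < G.genus

/-- One minor-operation step, from `G` to `H`. -/
def StepTo (G H : FinGraph) : Prop := ∃ μ ∈ G.ops, H = G.apply μ

/-- `H` is a minor of `G`: it is obtained from `G` by a sequence of minor-operations. -/
def IsMinorOf (H G : FinGraph) : Prop := Relation.ReflTransGen StepTo G H

/-- `H` is a proper minor of `G`. -/
def IsProperMinorOf (H G : FinGraph) : Prop := Relation.TransGen StepTo G H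

/-- Subgraph relation. -/
def IsSubgraphOf (H G : FinGraph) : Prop := H.verts ⊆ G.verts ∧ H.edges ⊆ G.edges

/-- Deletion of a set of vertices (with all incident edges). -/
noncomputable def delVerts (G : FinGraph) (S : Finset ℕ) : FinGraph where
  verts := G.verts \ S
  edges := G.edges.filter (fun e => ∀ v ∈ e, v ∉ S)
  edge_sub := by
    intro e he v hv
    rcases Finset.mem_filter.mp he with ⟨he0, hS⟩
    exact Finset.mem_sdiff.mpr ⟨G.edge_sub e he0 v hv, hS v hv⟩
  loopless := fun e he => G.loopless e (Finset.mem_filter.mp he).1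

/-- `G` is `k`-connected. -/
def KConnected (G : FinGraph) (k : ℕ) : Prop :=
  k < G.verts.card ∧ ∀ S : Finset ℕ, S ⊆ G.verts → S.card < k → (G.delVerts S).Connected

end FinGraph

/-- `G` is an obstruction for the orientable surface `S_k`:
`g(G) = k+1` and every proper minor of `G` has genus at most `k`. -/
def IsObstruction (G : FinGraph) (k : ℕ) : Prop :=
  G.genus = k + 1 ∧ ∀ H : FinGraph, H.IsProperMinorOf G → H.genus ≤ k

/-- A graph with two distinct terminals `x` and `y` (the class `G_xy`). -/
structure TGraph where
  G : FinGraph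
  x : ℕ
  y : ℕ
  hx : x ∈ G.verts
  hy : y ∈ G.verts
  hxy : x ≠ y

namespace TGraph

/-- `G` has no edge `xy` (i.e. `G ∈ G°_xy`). -/
def NoXY (G : TGraph) : Prop := s(G.x, G.y) ∉ G.G.edges

/-- `G` has the edge `xy`. -/
def HasXY (G : TGraph) : Prop := s(G.x, G.y) ∈ G.G.edges

/-- `G⁺`: `G` together with the edge `xy`. -/
def plus (G : TGraph) : TGraph where
  G := { verts := G.G.verts
         edges := insert s(G.x, G.y) G.G.edges
         edge_sub := by
           intro e he v hv
           rcases Finset.mem_insert.mp he with h | h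
           · subst h
             rcases Sym2.mem_iff.mp hv with rfl | rfl
             · exact G.hx
             · exact G.hy
           · exact G.G.edge_sub e h v hv
         loopless := by
           intro e he
           rcases Finset.mem_insert.mp he with h | h
           · subst h
             simpa [Sym2.mk_isDiag_iff] using G.hxy
           · exact G.G.loopless e h }
  x := G.x
  y := G.y
  hx := G.hx
  hy := G.hy
  hxy := G.hxy

/-- The set of minor-operations available for a graph with terminals: the edge `xy`
may not be contracted, and a contraction never contracts a terminal into a
non-terminal (the contracted vertex `μ.1.2` is not a terminal). -/
def ops (G : TGraph) : Set Op :=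
  {μ | s(μ.1.1, μ.1.2) ∈ G.G.edges ∧ (μ.2 = true → μ.1.2 ≠ G.x ∧ μ.1.2 ≠ G.y)}

/-- Applying a minor-operation to a graph with terminals. -/
noncomputable def apply (G : TGraph) (μ : Op) : TGraph :=
  if h : μ.2 = true → μ.1.2 ≠ G.x ∧ μ.1.2 ≠ G.y then
    { G := G.G.apply μ
      x := G.x
      y := G.y
      hx := by
        cases hb : μ.2 with
        | false => simpa [FinGraph.apply, hb, FinGraph.del] using G.hx
        | true =>
            simp only [FinGraph.apply, hb, cond_true, FinGraph.con]
            exact Finset.mem_insert_of_mem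
              (Finset.mem_erase.mpr ⟨fun hc => (h hb).1 hc.symm, G.hx⟩)
      hy := by
        cases hb : μ.2 with
        | false => simpa [FinGraph.apply, hb, FinGraph.del] using G.hy
        | true =>
            simp only [FinGraph.apply, hb, cond_true, FinGraph.con]
            exact Finset.mem_insert_of_mem
              (Finset.mem_erase.mpr ⟨fun hc => (h hb).2 hc.symm, G.hy⟩)
      hxy := G.hxy }
  else G

/-- One minor-operation step (for graphs with terminals). -/
def StepTo (G H : TGraph) : Prop := ∃ μ ∈ G.ops, H = G.apply μ

/-- `H` is a minor of `G` in `G_xy`. -/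
def IsMinorOf (H G : TGraph) : Prop := Relation.ReflTransGen StepTo G H

end TGraph

/-- The graph parameter `g`: the genus. -/
noncomputable def gP (G : TGraph) : ℤ := G.G.genus

/-- The graph parameter `g⁺`: the genus of `G⁺`. -/
noncomputable def gpP (G : TGraph) : ℤ := G.plus.G.genus

/-- The embedding `R` of `G` is `xy`-alternating: some face contains
`(x, y, x, y)` as a cyclic subsequence. -/
def IsAlt (G : TGraph) (R : Rot G.G) : Prop :=
  ∃ d ∈ G.G.darts, d.1 = G.x ∧ ∃ i j k : ℕ,
    0 < i ∧ i < j ∧ j < k ∧ k < Function.minimalPeriod (faceMap R) d ∧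
    ((faceMap R)^[i] d).1 = G.y ∧ ((faceMap R)^[j] d).1 = G.x ∧
    ((faceMap R)^[k] d).1 = G.y

/-- `G` is `xy`-alternating: it has an `xy`-alternating minimum genus embedding. -/
def IsXYAlt (G : TGraph) : Prop :=
  ∃ R : Rot G.G, 2 * (G.G.genus : ℤ) = eulerVal G.G R ∧ IsAlt G R

/-- The parameter `ε`. -/
noncomputable def epsP (G : TGraph) : ℤ := if IsXYAlt G then 1 else 0

/-- The parameter `ε⁺`, `ε⁺(G) = ε(G⁺)`. -/
noncomputable def epspP (G : TGraph) : ℤ := epsP G.plus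

/-- The alternating genus `g_a = g - ε`. -/
noncomputable def gaP (G : TGraph) : ℤ := gP G - epsP G

/-- The parameter `g_a⁺ = g⁺ - ε⁺`. -/
noncomputable def gapP (G : TGraph) : ℤ := gpP G - epspP G

/-- The parameter `θ = g⁺ - g`. -/
noncomputable def thetaP (G : TGraph) : ℤ := gpP G - gP G

/-- The parameter `η(G₁,G₂) = θ(G₁) + θ(G₂) - ε⁺(G₁)ε⁺(G₂)`. -/
noncomputable def etaP (G1 G2 : TGraph) : ℤ :=
  thetaP G1 + thetaP G2 - epspP G1 * epspP G2

/-- `↓k(P, G)`: the set of minor-operations that decrease the parameter `P` by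
at least `k`. -/
noncomputable def decSet (P : TGraph → ℤ) (k : ℤ) (G : TGraph) : Set Op :=
  {μ | μ ∈ G.ops ∧ P (G.apply μ) ≤ P G - k}

/-- The critical class `C(P)`: graphs all of whose minor-operations decrease `P`. -/
noncomputable def crit (P : TGraph → ℤ) : Set TGraph :=
  {G | G.ops = decSet P 1 G}

/-- The critical class `C°(P)`: members of `C(P)` without the edge `xy`. -/
noncomputable def critO (P : TGraph → ℤ) : Set TGraph :=
  {G | G.NoXY ∧ G.ops = decSet P 1 G}

/-- `C_k(P)`: members `G` of `C(P)` with `P(G) = k + 1`. -/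
noncomputable def critk (P : TGraph → ℤ) (k : ℕ) : Set TGraph :=
  {G | G ∈ crit P ∧ P G = k + 1}

/-- `C°_k(P)`: members `G` of `C°(P)` with `P(G) = k + 1`. -/
noncomputable def critOk (P : TGraph → ℤ) (k : ℕ) : Set TGraph :=
  {G | G ∈ critO P ∧ P G = k + 1}

/-- Hoppers of level 0. -/
noncomputable def hopper0 : Set TGraph :=
  {G | G.NoXY ∧ G.ops = decSet gP 1 G ∪ decSet gapP 2 G ∧ G ∉ critO gP}

/-- Hoppers of level 1. -/
noncomputable def hopper1 : Set TGraph :=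
  {G | G.NoXY ∧ G.ops = decSet gapP 1 G ∪ decSet gP 2 G ∧ G ∉ critO gapP}

/-- `b = s(a,b)` is a bar of the dumbbell `G`: a cut-edge whose deletion separates
the terminals. -/
def IsDumbbellBar (G : TGraph) (a b : ℕ) : Prop :=
  s(a, b) ∈ G.G.edges ∧ ¬ (G.G.del a b).Reach G.x G.y

/-- A dumbbell: a graph in `G°_xy` with a cut-edge separating the two terminals. -/
def IsDumbbell (G : TGraph) : Prop := G.NoXY ∧ ∃ a b : ℕ, IsDumbbellBar G a b

/-- The class `D` of dumbbells `G` with a bar `b` such that `θ(G) = 0`, every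
minor-operation other than those on the bar decreases `g`, and `ε⁺(G/b) = 1`. -/
noncomputable def classD : Set TGraph :=
  {G | G.NoXY ∧ ∃ a b : ℕ, IsDumbbellBar G a b ∧ ((a, b), true) ∈ G.ops ∧
    thetaP G = 0 ∧
    (∀ μ ∈ G.ops, s(μ.1.1, μ.1.2) ≠ s(a, b) → gP (G.apply μ) ≤ gP G - 1) ∧
    epspP (G.apply ((a, b), true)) = 1}

/-- `G` is an `xy`-sum with parts `G₁` and `G₂`. -/
structure XYSum (G G1 G2 : TGraph) : Prop where
  x1 : G1.x = G.x
  y1 : G1.y = G.y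
  x2 : G2.x = G.x
  y2 : G2.y = G.y
  no1 : G1.NoXY
  no2 : G2.NoXY
  vint : G1.G.verts ∩ G2.G.verts = {G.x, G.y}
  vuni : G.G.verts = G1.G.verts ∪ G2.G.verts
  edges : G.G.edges = G1.G.edges ∪ G2.G.edges ∨
    G.G.edges = insert s(G.x, G.y) (G1.G.edges ∪ G2.G.edges)
section Orb
variable {α : Type*}

def orb (f : α → α) (x : α) : Set α := {y | ∃ n : ℕ, f^[n] x = y}

def orbs (f : α → α) (s : Set α) : Set (Set α) := {S | ∃ x ∈ s, S = orb f x}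

lemma mem_orb_self (f : α → α) (x : α) : x ∈ orb f x := ⟨0, rfl⟩

lemma iterate_mem {f : α → α} {s : Set α} (h : Set.MapsTo f s s) {x : α} (hx : x ∈ s) (n : ℕ) :
    f^[n] x ∈ s := by
  induction n with
  | zero => simpa
  | succ n ih => rw [Function.iterate_succ_apply']; exact h ih

lemma orb_subset {f : α → α} {s : Set α} (h : Set.MapsTo f s s) {x : α} (hx : x ∈ s) :
    orb f x ⊆ s := by
  rintro y ⟨n, rfl⟩; exact iterate_mem h hx n

lemma iterate_cancel {f : α → α} {s : Set α} (hm : Set.MapsTo f s s) (hi : Set.InjOn f s)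
    {x : α} (hx : x ∈ s) : ∀ m k, f^[m] x = f^[m + k] x → x = f^[k] x := by
  intro m
  induction m with
  | zero => intro k h; simpa using h
  | succ m ih =>
      intro k h
      rw [Nat.succ_add, Function.iterate_succ_apply', Function.iterate_succ_apply'] at h
      exact ih k (hi (iterate_mem hm hx m) (iterate_mem hm hx _) h)

lemma exists_period {f : α → α} {s : Set α} (hm : Set.MapsTo f s s) (hi : Set.InjOn f s)
    (hs : s.Finite) {x : α} (hx : x ∈ s) : ∃ p : ℕ, 0 < p ∧ f^[p] x = x := by
  obtain ⟨a, b, hab, h⟩ := Set.Finite.exists_lt_map_eq_of_forall_mem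
    (f := fun n : ℕ => f^[n] x) (fun n => iterate_mem hm hx n) hs
  refine ⟨b - a, by omega, ?_⟩
  have : f^[a] x = f^[a + (b - a)] x := by rw [show a + (b - a) = b by omega]; exact h
  exact (iterate_cancel hm hi hx a (b - a) this).symm

lemma iterate_period_mul {f : α → α} {x : α} {p : ℕ} (hp : f^[p] x = x) :
    ∀ k, f^[p * k] x = x := by
  intro k
  induction k with
  | zero => simp
  | succ k ih => rw [Nat.mul_succ, Function.iterate_add_apply, hp, ih]

lemma iterate_mod {f : α → α} {x : α} {p : ℕ} (hp : f^[p] x = x) (n : ℕ) :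
    f^[n] x = f^[n % p] x := by
  conv_lhs => rw [← Nat.mod_add_div n p]
  rw [Function.iterate_add_apply, iterate_period_mul hp]

lemma orb_symm {f : α → α} {s : Set α} (hm : Set.MapsTo f s s) (hi : Set.InjOn f s)
    (hs : s.Finite) {x y : α} (hx : x ∈ s) (hy : y ∈ orb f x) : x ∈ orb f y := by
  obtain ⟨n, rfl⟩ := hy
  obtain ⟨p, hp0, hp⟩ := exists_period hm hi hs hx
  refine ⟨p * (n + 1) - n, ?_⟩
  have hle : n ≤ p * (n + 1) := by nlinarith
  rw [← Function.iterate_add_apply, show p * (n + 1) - n + n = p * (n + 1) by omega]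
  exact iterate_period_mul hp _

lemma orb_trans {f : α → α} {x y : α} (hy : y ∈ orb f x) : orb f y ⊆ orb f x := by
  obtain ⟨m, rfl⟩ := hy
  rintro z ⟨n, rfl⟩
  exact ⟨n + m, by rw [Function.iterate_add_apply]⟩

lemma orb_eq {f : α → α} {s : Set α} (hm : Set.MapsTo f s s) (hi : Set.InjOn f s)
    (hs : s.Finite) {x y : α} (hx : x ∈ s) (hy : y ∈ orb f x) : orb f y = orb f x :=
  le_antisymm (orb_trans hy) (orb_trans (orb_symm hm hi hs hx hy))

lemma orb_congr {f g : α → α} {s : Set α} (hm : Set.MapsTo f s s)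
    (h : ∀ y ∈ s, f y = g y) {x : α} (hx : x ∈ s) : orb f x = orb g x := by
  have key : ∀ n, f^[n] x = g^[n] x := by
    intro n
    induction n with
    | zero => rfl
    | succ n ih =>
        rw [Function.iterate_succ_apply', Function.iterate_succ_apply', ← ih]
        exact h _ (iterate_mem hm hx n)
  ext z; constructor <;> rintro ⟨n, rfl⟩
  · exact ⟨n, (key n).symm⟩
  · exact ⟨n, key n⟩

lemma orbs_eq_image (f : α → α) (s : Set α) : orbs f s = orb f '' s := by
  ext S; simp [orbs, Set.image, eq_comm]

lemma orbs_finite {f : α → α} {s : Set α} (hs : s.Finite) : (orbs f s).Finite := by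
  rw [orbs_eq_image]; exact hs.image _

lemma mem_orbs {f : α → α} {s : Set α} {x : α} (hx : x ∈ s) : orb f x ∈ orbs f s :=
  ⟨x, hx, rfl⟩

end Orb

section Ins
variable {α : Type*} {s : Set α} {T f : α → α} {a e : α}

lemma ins_bijOn (hT : Set.BijOn T s s) (ha : a ∈ s) (he : e ∉ s)
    (hfa : f a = e) (hfe : f e = T a) (hfd : ∀ d ∈ s, d ≠ a → f d = T d) :
    Set.BijOn f (insert e s) (insert e s) := by
  obtain ⟨hTm, hTi, hTs⟩ := hT
  refine ⟨?_, ?_, ?_⟩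
  · rintro d (rfl | hd)
    · rw [hfe]; exact Set.mem_insert_of_mem _ (hTm ha)
    · by_cases hda : d = a
      · subst hda; rw [hfa]; exact Set.mem_insert _ _
      · rw [hfd d hd hda]; exact Set.mem_insert_of_mem _ (hTm hd)
  · rintro d₁ (rfl | h₁) d₂ (rfl | h₂) heq
    · rfl
    · by_cases hda : d₂ = a
      · subst hda; rw [hfe, hfa] at heq; exact absurd (heq ▸ hTm ha) he
      · rw [hfe, hfd d₂ h₂ hda] at heq
        exact absurd (hTi ha h₂ heq).symm hda
    · by_cases hda : d₁ = a
      · subst hda; rw [hfa, hfe] at heq; exact absurd (heq.symm ▸ hTm ha) he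
      · rw [hfd d₁ h₁ hda, hfe] at heq
        exact absurd (hTi h₁ ha heq) hda
    · by_cases h1a : d₁ = a <;> by_cases h2a : d₂ = a
      · rw [h1a, h2a]
      · subst h1a; rw [hfa, hfd d₂ h₂ h2a] at heq
        exact absurd (heq ▸ hTm h₂) he
      · subst h2a; rw [hfd d₁ h₁ h1a, hfa] at heq
        exact absurd (heq.symm ▸ hTm h₁) he
      · rw [hfd d₁ h₁ h1a, hfd d₂ h₂ h2a] at heq
        exact hTi h₁ h₂ heq
  · rintro y (rfl | hy)
    · exact ⟨a, Set.mem_insert_of_mem _ ha, hfa⟩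
    · obtain ⟨d, hd, hdy⟩ := hTs hy
      by_cases hda : d = a
      · subst hda; exact ⟨e, Set.mem_insert _ _, by rw [hfe, hdy]⟩
      · exact ⟨d, Set.mem_insert_of_mem _ hd, by rw [hfd d hd hda, hdy]⟩

lemma ins_orb_of_not (hT : Set.BijOn T s s) (hfd : ∀ d ∈ s, d ≠ a → f d = T d)
    {x : α} (hx : x ∈ s) (hax : a ∉ orb T x) : orb f x = orb T x := by
  have key : ∀ n, f^[n] x = T^[n] x := by
    intro n
    induction n with
    | zero => rfl
    | succ n ih =>
        rw [Function.iterate_succ_apply', Function.iterate_succ_apply', ih]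
        refine hfd _ (iterate_mem hT.mapsTo hx n) fun hh => hax ?_
        exact hh ▸ ⟨n, rfl⟩
  ext z; constructor <;> rintro ⟨n, rfl⟩
  · exact ⟨n, (key n).symm⟩
  · exact ⟨n, key n⟩

lemma ins_orbT_subset_orb (hT : Set.BijOn T s s) (ha : a ∈ s)
    (hfa : f a = e) (hfe : f e = T a) (hfd : ∀ d ∈ s, d ≠ a → f d = T d)
    {x : α} (hx : x ∈ s) : orb T x ⊆ orb f x := by
  have key : ∀ n, ∃ m, f^[m] x = T^[n] x := by
    intro n
    induction n with
    | zero => exact ⟨0, rfl⟩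
    | succ n ih =>
        obtain ⟨m, hm⟩ := ih
        rw [Function.iterate_succ_apply']
        by_cases hza : T^[n] x = a
        · refine ⟨m + 2, ?_⟩
          rw [show m + 2 = m + 1 + 1 by ring, Function.iterate_succ_apply',
            Function.iterate_succ_apply', hm, hza, hfa, hfe]
        · refine ⟨m + 1, ?_⟩
          rw [Function.iterate_succ_apply', hm,
            hfd _ (iterate_mem hT.mapsTo hx n) hza]
  rintro z ⟨n, rfl⟩
  obtain ⟨m, hm⟩ := key n
  exact ⟨m, hm⟩

lemma ins_orb_a (hT : Set.BijOn T s s) (ha : a ∈ s) (he : e ∉ s)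
    (hfa : f a = e) (hfe : f e = T a) (hfd : ∀ d ∈ s, d ≠ a → f d = T d) :
    orb f a = insert e (orb T a) := by
  apply le_antisymm
  · rintro z ⟨n, rfl⟩
    induction n with
    | zero => exact Set.mem_insert_of_mem _ (mem_orb_self T a)
    | succ n ih =>
        rw [Function.iterate_succ_apply']
        rcases ih with hz | hz
        · rw [hz, hfe]
          exact Set.mem_insert_of_mem _ ⟨1, rfl⟩
        · by_cases hza : f^[n] a = a
          · rw [hza, hfa]; exact Set.mem_insert _ _
          · rw [hfd _ (orb_subset hT.mapsTo ha hz) hza]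
            obtain ⟨k, hk⟩ := hz
            exact Set.mem_insert_of_mem _ ⟨k + 1, by
              rw [Function.iterate_succ_apply', hk]⟩
  · rintro z (rfl | hz)
    · exact ⟨1, by simp [hfa]⟩
    · exact ins_orbT_subset_orb hT ha hfa hfe hfd ha hz

lemma ins_orb_of_mem (hs : s.Finite) (hT : Set.BijOn T s s) (ha : a ∈ s) (he : e ∉ s)
    (hfa : f a = e) (hfe : f e = T a) (hfd : ∀ d ∈ s, d ≠ a → f d = T d)
    {x : α} (hx : x ∈ s) (hax : a ∈ orb T x) : orb f x = insert e (orb T x) := by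
  have hbij := ins_bijOn hT ha he hfa hfe hfd
  have h1 : orb T a = orb T x := orb_eq hT.mapsTo hT.injOn hs hx hax
  have h2 : a ∈ orb f x := ins_orbT_subset_orb hT ha hfa hfe hfd hx hax
  have h3 : orb f a = orb f x :=
    orb_eq hbij.mapsTo hbij.injOn (hs.insert e) (Set.mem_insert_of_mem _ hx) h2
  rw [← h3, ins_orb_a hT ha he hfa hfe hfd, h1]

lemma ins_orb_e (hs : s.Finite) (hT : Set.BijOn T s s) (ha : a ∈ s) (he : e ∉ s)
    (hfa : f a = e) (hfe : f e = T a) (hfd : ∀ d ∈ s, d ≠ a → f d = T d) :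
    orb f e = insert e (orb T a) := by
  have hbij := ins_bijOn hT ha he hfa hfe hfd
  have h2 : e ∈ orb f a := ⟨1, by simp [hfa]⟩
  have h3 : orb f e = orb f a :=
    orb_eq hbij.mapsTo hbij.injOn (hs.insert e) (Set.mem_insert_of_mem _ ha) h2
  rw [h3, ins_orb_a hT ha he hfa hfe hfd]

lemma ins_orbs (hs : s.Finite) (hT : Set.BijOn T s s) (ha : a ∈ s) (he : e ∉ s)
    (hfa : f a = e) (hfe : f e = T a) (hfd : ∀ d ∈ s, d ≠ a → f d = T d) :
    orbs f (insert e s) = insert (insert e (orb T a)) (orbs T s \ {orb T a}) := by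
  ext S
  constructor
  · rintro ⟨x, hx | hx, rfl⟩
    · subst hx; rw [ins_orb_e hs hT ha he hfa hfe hfd]; exact Set.mem_insert _ _
    · by_cases hax : a ∈ orb T x
      · rw [ins_orb_of_mem hs hT ha he hfa hfe hfd hx hax,
          orb_eq hT.mapsTo hT.injOn hs hx hax]
        exact Set.mem_insert _ _
      · rw [ins_orb_of_not hT hfd hx hax]
        refine Set.mem_insert_of_mem _ ⟨mem_orbs hx, fun h => hax ?_⟩
        rw [Set.mem_singleton_iff] at h
        exact h ▸ mem_orb_self T a
  · rintro (rfl | ⟨⟨x, hx, rfl⟩, hne⟩)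
    · exact ⟨a, Set.mem_insert_of_mem _ ha, (ins_orb_a hT ha he hfa hfe hfd).symm⟩
    · have hax : a ∉ orb T x := fun h =>
        (hne (Set.mem_singleton_iff.mpr (orb_eq hT.mapsTo hT.injOn hs hx h).symm))
      exact ⟨x, Set.mem_insert_of_mem _ hx,
        (ins_orb_of_not hT hfd hx hax).symm⟩

lemma ins_ncard (hs : s.Finite) (hT : Set.BijOn T s s) (ha : a ∈ s) (he : e ∉ s)
    (hfa : f a = e) (hfe : f e = T a) (hfd : ∀ d ∈ s, d ≠ a → f d = T d) :
    (orbs f (insert e s)).ncard = (orbs T s).ncard := by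
  rw [ins_orbs hs hT ha he hfa hfe hfd]
  have hfin : (orbs T s).Finite := orbs_finite hs
  have h1 : insert e (orb T a) ∉ orbs T s \ {orb T a} := by
    rintro ⟨⟨x, hx, hEq⟩, -⟩
    have : e ∈ orb T x := hEq ▸ Set.mem_insert _ _
    exact he (orb_subset hT.mapsTo hx this)
  rw [Set.ncard_insert_of_notMem h1 (hfin.diff)]
  have h2 : orb T a ∈ orbs T s := mem_orbs ha
  have : orbs T s = insert (orb T a) (orbs T s \ {orb T a}) := by
    rw [Set.insert_diff_singleton, Set.insert_eq_self.mpr h2]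
  conv_rhs => rw [this]
  rw [Set.ncard_insert_of_notMem (by simp) (hfin.diff)]

end Ins

section Swp
variable {α : Type*} [DecidableEq α] {s : Set α} {F : α → α} {a b : α}

/-- `F` precomposed with the transposition of `a` and `b`. -/
def swp (F : α → α) (a b : α) : α → α := fun d => F (Equiv.swap a b d)

lemma swp_apply_a (F : α → α) (a b : α) : swp F a b a = F b := by
  simp [swp]

lemma swp_apply_b (F : α → α) (a b : α) : swp F a b b = F a := by
  simp [swp]

lemma swp_apply_other (F : α → α) {a b d : α} (h1 : d ≠ a) (h2 : d ≠ b) :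
    swp F a b d = F d := by
  simp [swp, Equiv.swap_apply_of_ne_of_ne h1 h2]

lemma swp_swp (F : α → α) (a b : α) : swp (swp F a b) a b = F := by
  funext d; simp [swp]

lemma swp_bijOn (hF : Set.BijOn F s s) (ha : a ∈ s) (hb : b ∈ s) :
    Set.BijOn (swp F a b) s s := by
  apply hF.comp
  refine ⟨?_, ?_, ?_⟩
  · intro d hd
    rcases eq_or_ne d a with rfl | h1
    · rwa [Equiv.swap_apply_left]
    rcases eq_or_ne d b with rfl | h2
    · rwa [Equiv.swap_apply_right]
    · rwa [Equiv.swap_apply_of_ne_of_ne h1 h2]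
  · exact fun d₁ _ d₂ _ h => (Equiv.swap a b).injective h
  · intro y hy
    refine ⟨Equiv.swap a b y, ?_, by simp⟩
    rcases eq_or_ne y a with rfl | h1
    · rwa [Equiv.swap_apply_left]
    rcases eq_or_ne y b with rfl | h2
    · rwa [Equiv.swap_apply_right]
    · rwa [Equiv.swap_apply_of_ne_of_ne h1 h2]

lemma orb_closed {f : α → α} {x y : α} (hy : y ∈ orb f x) : f y ∈ orb f x := by
  obtain ⟨n, rfl⟩ := hy
  exact ⟨n + 1, by rw [Function.iterate_succ_apply']⟩

/-- A variant of `orb_congr` assuming agreement only on the orbit. -/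
lemma orb_congr' {f g : α → α} {x : α} (h : ∀ y ∈ orb f x, f y = g y) :
    orb f x = orb g x := by
  have key : ∀ n, f^[n] x = g^[n] x := by
    intro n
    induction n with
    | zero => rfl
    | succ n ih =>
        rw [Function.iterate_succ_apply', Function.iterate_succ_apply', ← ih]
        exact h _ ⟨n, rfl⟩
  ext z; constructor <;> rintro ⟨n, rfl⟩
  · exact ⟨n, (key n).symm⟩
  · exact ⟨n, key n⟩

lemma swp_orb_union (ha : a ∈ s) (hb : b ∈ s) :
    orb (swp F a b) a ∪ orb (swp F a b) b = orb F a ∪ orb F b := by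
  apply le_antisymm
  · have main : ∀ x, x ∈ orb F a ∪ orb F b →
        (∀ n, (swp F a b)^[n] x ∈ orb F a ∪ orb F b) := by
      intro x hx n
      induction n with
      | zero => simpa
      | succ n ih =>
          rw [Function.iterate_succ_apply']
          rcases eq_or_ne ((swp F a b)^[n] x) a with hz | hz1
          · rw [hz, swp_apply_a]
            exact Or.inr (orb_closed (mem_orb_self F b))
          rcases eq_or_ne ((swp F a b)^[n] x) b with hz | hz2
          · rw [hz, swp_apply_b]
            exact Or.inl (orb_closed (mem_orb_self F a))
          · rw [swp_apply_other F hz1 hz2]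
            rcases ih with h | h
            · exact Or.inl (orb_closed h)
            · exact Or.inr (orb_closed h)
    rintro z (⟨n, rfl⟩ | ⟨n, rfl⟩)
    · exact main a (Or.inl (mem_orb_self F a)) n
    · exact main b (Or.inr (mem_orb_self F b)) n
  · have main : ∀ x, x ∈ orb (swp F a b) a ∪ orb (swp F a b) b →
        (∀ n, F^[n] x ∈ orb (swp F a b) a ∪ orb (swp F a b) b) := by
      intro x hx n
      induction n with
      | zero => simpa
      | succ n ih =>
          rw [Function.iterate_succ_apply']
          rcases eq_or_ne (F^[n] x) a with hz | hz1
          · rw [hz, show F a = swp F a b b from (swp_apply_b F a b).symm]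
            exact Or.inr (orb_closed (mem_orb_self (swp F a b) b))
          rcases eq_or_ne (F^[n] x) b with hz | hz2
          · rw [hz, show F b = swp F a b a from (swp_apply_a F a b).symm]
            exact Or.inl (orb_closed (mem_orb_self (swp F a b) a))
          · rw [show F (F^[n] x) = swp F a b (F^[n] x) from
              (swp_apply_other F hz1 hz2).symm]
            rcases ih with h | h
            · exact Or.inl (orb_closed h)
            · exact Or.inr (orb_closed h)
    rintro z (⟨n, rfl⟩ | ⟨n, rfl⟩)
    · exact main a (Or.inl (mem_orb_self (swp F a b) a)) n
    · exact main b (Or.inr (mem_orb_self (swp F a b) b)) n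

lemma swp_mem_orb (hs : s.Finite) (hF : Set.BijOn F s s) (ha : a ∈ s) (hb : b ∈ s)
    (hab : a ≠ b) (hnb : b ∉ orb F a) : b ∈ orb (swp F a b) a := by
  set T := swp F a b with hTdef
  have hna : a ∉ orb F b := by
    intro h
    have := orb_eq hF.mapsTo hF.injOn hs hb h
    exact hnb (this ▸ mem_orb_self F b)
  obtain ⟨p₀, hp₀, hfix⟩ := exists_period hF.mapsTo hF.injOn hs hb
  have hper : Function.IsPeriodicPt F p₀ b := hfix
  have hkpos : 0 < Function.minimalPeriod F b := hper.minimalPeriod_pos hp₀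
  set k := Function.minimalPeriod F b with hk
  have hkfix : F^[k] b = b := Function.iterate_minimalPeriod
  have chain : ∀ j, j ≤ k → 1 ≤ j → T^[j] a = F^[j] b := by
    intro j
    induction j with
    | zero => omega
    | succ j ih =>
        intro hjk _
        rcases Nat.eq_zero_or_pos j with rfl | hj1
        · simpa [hTdef] using swp_apply_a F a b
        · rw [Function.iterate_succ_apply', ih (by omega) hj1,
            Function.iterate_succ_apply']
          have hzb : F^[j] b ≠ b := by
            intro h
            exact Function.not_isPeriodicPt_of_pos_of_lt_minimalPeriod
              (by omega) (by omega) h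
          have hza : F^[j] b ≠ a := fun h => hna ⟨j, h⟩
          exact swp_apply_other F hza hzb
  exact ⟨k, by rw [chain k le_rfl hkpos, hkfix]⟩

lemma swp_not_mem_orb (hs : s.Finite) (hF : Set.BijOn F s s) (ha : a ∈ s) (hb : b ∈ s)
    (hab : a ≠ b) (hmb : b ∈ orb F a) : b ∉ orb (swp F a b) a := by
  obtain ⟨p₀, hp₀, hfix⟩ := exists_period hF.mapsTo hF.injOn hs ha
  have hper : Function.IsPeriodicPt F p₀ a := hfix
  have hppos : 0 < Function.minimalPeriod F a := hper.minimalPeriod_pos hp₀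
  set p := Function.minimalPeriod F a with hp
  have hpfix : F^[p] a = a := Function.iterate_minimalPeriod
  obtain ⟨m₀, hm₀⟩ := hmb
  set m := m₀ % p with hm
  have hmb' : F^[m] a = b := by rw [hm, ← iterate_mod hpfix, hm₀]
  have hm0 : m ≠ 0 := by
    intro h; rw [h] at hmb'; exact hab hmb'
  have hmp : m < p := Nat.mod_lt _ hppos
  have chain : ∀ j, j ≤ p - m → 1 ≤ j → (swp F a b)^[j] a = F^[m + j] a := by
    intro j
    induction j with
    | zero => omega
    | succ j ih =>
        intro hjk _
        rcases Nat.eq_zero_or_pos j with rfl | hj1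
        · show (swp F a b)^[1] a = F^[m + 1] a
          rw [Function.iterate_one]
          rw [show (swp F a b a : α) = F b from swp_apply_a F a b, ← hmb']
          exact (Function.iterate_succ_apply' F m a).symm
        · rw [Function.iterate_succ_apply', ih (by omega) hj1]
          have hza : F^[m + j] a ≠ a := by
            intro h
            exact Function.not_isPeriodicPt_of_pos_of_lt_minimalPeriod
              (by omega) (by omega) h
          have hzb : F^[m + j] a ≠ b := by
            intro h
            rw [← hmb'] at h
            have := iterate_cancel hF.mapsTo hF.injOn ha m j (by rw [← h])
            exact Function.not_isPeriodicPt_of_pos_of_lt_minimalPeriod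
              (by omega) (by omega) this.symm
          rw [swp_apply_other F hza hzb, show m + (j + 1) = (m + j) + 1 by ring]
          exact (Function.iterate_succ_apply' F (m + j) a).symm
  have hTq : (swp F a b)^[p - m] a = a := by
    rw [chain (p - m) le_rfl (by omega), show m + (p - m) = p by omega, hpfix]
  rintro ⟨n, hn⟩
  have hn' : (swp F a b)^[n % (p - m)] a = b := by rw [← iterate_mod hTq, hn]
  rcases Nat.eq_zero_or_pos (n % (p - m)) with h0 | h1
  · rw [h0] at hn'; exact hab hn'
  · have hlt : n % (p - m) < p - m := Nat.mod_lt _ (by omega)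
    rw [chain _ (le_of_lt hlt) h1, ← hmb'] at hn'
    have := iterate_cancel hF.mapsTo hF.injOn ha m (n % (p - m)) hn'.symm
    exact Function.not_isPeriodicPt_of_pos_of_lt_minimalPeriod
      (by omega) (by omega) this.symm

lemma swp_ncard_diff (hs : s.Finite) (hF : Set.BijOn F s s) (ha : a ∈ s) (hb : b ∈ s)
    (hab : a ≠ b) (hnb : b ∉ orb F a) :
    (orbs (swp F a b) s).ncard + 1 = (orbs F s).ncard := by
  set T := swp F a b with hTdef
  have hTbij : Set.BijOn T s s := swp_bijOn hF ha hb
  have hna : a ∉ orb F b := by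
    intro h
    have := orb_eq hF.mapsTo hF.injOn hs hb h
    exact hnb (this ▸ mem_orb_self F b)
  have hbTa : b ∈ orb T a := swp_mem_orb hs hF ha hb hab hnb
  have hTab : orb T b = orb T a := orb_eq hTbij.mapsTo hTbij.injOn hs ha hbTa
  have hU : orb T a = orb F a ∪ orb F b := by
    have := swp_orb_union (F := F) ha hb
    rw [hTab] at this; rw [← hTdef] at this; rw [Set.union_self] at this; exact this
  set Q : Set (Set α) := orbs F s \ {orb F a, orb F b} with hQ
  have hQelem : ∀ S ∈ Q, a ∉ S ∧ b ∉ S := by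
    rintro S ⟨⟨x, hx, rfl⟩, hS⟩
    constructor
    · intro hmem
      exact hS (Or.inl (orb_eq hF.mapsTo hF.injOn hs hx hmem).symm)
    · intro hmem
      exact hS (Or.inr (orb_eq hF.mapsTo hF.injOn hs hx hmem).symm)
  have horbsT : orbs T s = insert (orb T a) Q := by
    ext S
    constructor
    · rintro ⟨x, hx, rfl⟩
      by_cases hxa : x ∈ orb T a
      · exact Or.inl (orb_eq hTbij.mapsTo hTbij.injOn hs ha hxa)
      · have hax : a ∉ orb F x := by
          intro h
          exact hxa (hU ▸ Or.inl (orb_symm hF.mapsTo hF.injOn hs hx h))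
        have hbx : b ∉ orb F x := by
          intro h
          exact hxa (hU ▸ Or.inr (orb_symm hF.mapsTo hF.injOn hs hx h))
        have heq : orb F x = orb T x := by
          apply orb_congr'
          intro y hy
          refine (swp_apply_other F (fun h => hax (by rw [← h]; exact hy))
            (fun h => hbx (by rw [← h]; exact hy))).symm
        refine Or.inr ⟨⟨x, hx, heq.symm⟩, ?_⟩
        rintro (h | h)
        · rw [← heq] at h; exact hax (h ▸ mem_orb_self F a)
        · rw [← heq] at h; exact hbx (h ▸ mem_orb_self F b)
    · rintro (rfl | ⟨⟨x, hx, rfl⟩, hS⟩)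
      · exact ⟨a, ha, rfl⟩
      · have hax : a ∉ orb F x := fun h =>
          hS (Or.inl (orb_eq hF.mapsTo hF.injOn hs hx h).symm)
        have hbx : b ∉ orb F x := fun h =>
          hS (Or.inr (orb_eq hF.mapsTo hF.injOn hs hx h).symm)
        have heq : orb F x = orb T x := by
          apply orb_congr'
          intro y hy
          exact (swp_apply_other F (fun h => hax (by rw [← h]; exact hy))
            (fun h => hbx (by rw [← h]; exact hy))).symm
        exact ⟨x, hx, heq⟩
  have horbsF : orbs F s = insert (orb F a) (insert (orb F b) Q) := by
    ext S
    constructor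
    · rintro ⟨x, hx, rfl⟩
      by_cases h1 : orb F x = orb F a
      · exact Or.inl h1
      by_cases h2 : orb F x = orb F b
      · exact Or.inr (Or.inl h2)
      · exact Or.inr (Or.inr ⟨⟨x, hx, rfl⟩, by
          rintro (h | h) <;> [exact h1 h; exact h2 h]⟩)
    · rintro (rfl | rfl | ⟨h, -⟩)
      · exact ⟨a, ha, rfl⟩
      · exact ⟨b, hb, rfl⟩
      · exact h
  have hQfin : Q.Finite := (orbs_finite hs).diff
  have hTa_not : orb T a ∉ Q := by
    intro h
    exact (hQelem _ h).1 (hU ▸ Or.inl (mem_orb_self F a))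
  have hFb_not : orb F b ∉ Q := fun h => (hQelem _ h).2 (mem_orb_self F b)
  have hFa_ne : orb F a ≠ orb F b := by
    intro h
    exact hnb (h ▸ mem_orb_self F b)
  have hFa_not : orb F a ∉ insert (orb F b) Q := by
    rintro (h | h)
    · exact hFa_ne h
    · exact (hQelem _ h).1 (mem_orb_self F a)
  rw [horbsT, horbsF, Set.ncard_insert_of_notMem hTa_not hQfin,
    Set.ncard_insert_of_notMem hFa_not (hQfin.insert _),
    Set.ncard_insert_of_notMem hFb_not hQfin]

lemma swp_ncard_same (hs : s.Finite) (hF : Set.BijOn F s s) (ha : a ∈ s) (hb : b ∈ s)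
    (hab : a ≠ b) (hmb : b ∈ orb F a) :
    (orbs (swp F a b) s).ncard = (orbs F s).ncard + 1 := by
  have hnb : b ∉ orb (swp F a b) a := swp_not_mem_orb hs hF ha hb hab hmb
  have := swp_ncard_diff hs (swp_bijOn hF ha hb) ha hb hab hnb
  rw [swp_swp] at this
  omega

end Swp
section GraphLib

open FinGraph

lemma FinGraph.ext' {G H : FinGraph} (h1 : G.verts = H.verts) (h2 : G.edges = H.edges) : G = H := by
  cases G; cases H
  simp only at h1 h2
  subst h1; subst h2
  rfl

lemma FinGraph.mem_verts_of_mem_darts {G : FinGraph} {d : ℕ × ℕ} (hd : d ∈ G.darts) :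
    d.1 ∈ G.verts ∧ d.2 ∈ G.verts :=
  ⟨G.edge_sub _ hd _ (Sym2.mem_mk_left _ _), G.edge_sub _ hd _ (Sym2.mem_mk_right _ _)⟩

lemma FinGraph.darts_finite (G : FinGraph) : G.darts.Finite := by
  apply Set.Finite.subset (G.verts ×ˢ G.verts).finite_toSet
  intro d hd
  simp only [Finset.coe_product, Set.mem_prod, Finset.mem_coe]
  exact FinGraph.mem_verts_of_mem_darts hd

lemma FinGraph.swap_mem_darts {G : FinGraph} {d : ℕ × ℕ} (hd : d ∈ G.darts) :
    (d.2, d.1) ∈ G.darts := by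
  have : s(d.2, d.1) = s(d.1, d.2) := Sym2.eq_swap
  simpa [FinGraph.darts, this] using hd

/-- The darts with a given source vertex. -/
def FinGraph.dartsAt (G : FinGraph) (u : ℕ) : Set (ℕ × ℕ) := {d ∈ G.darts | d.1 = u}

lemma FinGraph.dartsAt_subset (G : FinGraph) (u : ℕ) : G.dartsAt u ⊆ G.darts := fun _ h => h.1

lemma FinGraph.dartsAt_finite (G : FinGraph) (u : ℕ) : (G.dartsAt u).Finite :=
  G.darts_finite.subset (G.dartsAt_subset u)

lemma Rot.bijOn_dartsAt {G : FinGraph} (R : Rot G) (u : ℕ) :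
    Set.BijOn R.r (G.dartsAt u) (G.dartsAt u) := by
  refine ⟨?_, R.bij.injOn.mono (G.dartsAt_subset u), ?_⟩
  · rintro d ⟨hd, hd1⟩
    exact ⟨R.bij.mapsTo hd, by rw [R.fix d hd, hd1]⟩
  · rintro y ⟨hy, hy1⟩
    obtain ⟨d, hd, hdy⟩ := R.bij.surjOn hy
    refine ⟨d, ⟨hd, ?_⟩, hdy⟩
    rw [← hy1, ← hdy, R.fix d hd]

lemma faceMap_bijOn {G : FinGraph} (R : Rot G) :
    Set.BijOn (faceMap R) G.darts G.darts := by
  have hswap : Set.BijOn (fun d : ℕ × ℕ => (d.2, d.1)) G.darts G.darts := by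
    refine ⟨fun d hd => FinGraph.swap_mem_darts hd, ?_, ?_⟩
    · intro d₁ _ d₂ _ h
      simp only [Prod.mk.injEq] at h
      exact Prod.ext h.2 h.1
    · intro y hy
      exact ⟨(y.2, y.1), FinGraph.swap_mem_darts hy, rfl⟩
  exact R.bij.comp hswap

lemma fst_faceMap {G : FinGraph} (R : Rot G) {d : ℕ × ℕ} (hd : d ∈ G.darts) :
    (faceMap R d).1 = d.2 :=
  R.fix (d.2, d.1) (FinGraph.swap_mem_darts hd)

lemma faceCount_eq {G : FinGraph} (R : Rot G) :
    faceCount R = (orbs (faceMap R) G.darts).ncard + G.isolCount := rfl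

/-- Vertex `u` has an outgoing dart. -/
def FinGraph.HasDart (G : FinGraph) (u : ℕ) : Prop := ∃ w, (u, w) ∈ G.darts

lemma FinGraph.hasDart_iff (G : FinGraph) (u : ℕ) :
    G.HasDart u ↔ ¬ (∀ e ∈ G.edges, u ∉ e) := by
  constructor
  · rintro ⟨w, hw⟩ h
    exact h _ hw (Sym2.mem_mk_left _ _)
  · intro h
    push_neg at h
    obtain ⟨e, he, hue⟩ := h
    induction e using Sym2.ind with
    | _ p q =>
        rcases Sym2.mem_iff.mp hue with rfl | rfl
        · exact ⟨q, he⟩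
        · exact ⟨p, by rwa [FinGraph.darts, Set.mem_setOf_eq, Sym2.eq_swap]⟩

/-- Reachability set (connected component of a vertex). -/
def FinGraph.cset (G : FinGraph) (v : ℕ) : Set ℕ := {p | G.Reach v p}

lemma FinGraph.compCount_eq (G : FinGraph) : G.compCount = (G.cset '' ↑G.verts).ncard := by
  unfold FinGraph.compCount
  congr 1
  ext S
  simp [FinGraph.cset, Set.mem_image, eq_comm]

lemma FinGraph.adj_symm {G : FinGraph} {p q : ℕ} (h : G.Adj p q) : G.Adj q p := by
  rwa [FinGraph.Adj, Sym2.eq_swap]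

lemma FinGraph.reach_symm {G : FinGraph} {p q : ℕ} (h : G.Reach p q) : G.Reach q p :=
  by haveI : Std.Symm G.Adj := ⟨fun _ _ h' => FinGraph.adj_symm h'⟩; exact Std.Symm.symm (r := Relation.ReflTransGen G.Adj) _ _ h

lemma FinGraph.cset_eq_of_reach {G : FinGraph} {p q : ℕ} (h : G.Reach p q) :
    G.cset p = G.cset q := by
  ext z
  exact ⟨fun hz => (FinGraph.reach_symm h).trans hz, fun hz => h.trans hz⟩

lemma FinGraph.reach_of_cset_eq {G : FinGraph} {p q : ℕ} (h : G.cset p = G.cset q) :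
    G.Reach p q := by
  have : q ∈ G.cset q := Relation.ReflTransGen.refl
  rw [← h] at this
  exact this

lemma FinGraph.hasDart_of_reach {G : FinGraph} {p q : ℕ} (h : G.Reach p q) (hne : p ≠ q) :
    G.HasDart p := by
  rcases Relation.ReflTransGen.cases_head h with rfl | ⟨c, hc, -⟩
  · exact absurd rfl hne
  · exact ⟨c, hc⟩

end GraphLib
section AddE

/-- `G` together with an additional edge `uv`. -/
def FinGraph.addE (G : FinGraph) (u v : ℕ) (hu : u ∈ G.verts) (hv : v ∈ G.verts)
    (huv : u ≠ v) : FinGraph where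
  verts := G.verts
  edges := insert s(u, v) G.edges
  edge_sub := by
    intro e he w hw
    rcases Finset.mem_insert.mp he with h | h
    · subst h
      rcases Sym2.mem_iff.mp hw with rfl | rfl
      · exact hu
      · exact hv
    · exact G.edge_sub e h w hw
  loopless := by
    intro e he
    rcases Finset.mem_insert.mp he with h | h
    · subst h; simpa [Sym2.mk_isDiag_iff] using huv
    · exact G.loopless e h

variable {G : FinGraph} {u v : ℕ} {hu : u ∈ G.verts} {hv : v ∈ G.verts} {huv : u ≠ v}

lemma FinGraph.addE_comm : G.addE u v hu hv huv = G.addE v u hv hu huv.symm := by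
  apply FinGraph.ext'
  · rfl
  · show insert s(u, v) G.edges = insert s(v, u) G.edges
    rw [Sym2.eq_swap]

lemma FinGraph.addE_darts :
    (G.addE u v hu hv huv).darts = insert (u, v) (insert (v, u) G.darts) := by
  ext p
  simp only [FinGraph.darts, FinGraph.addE, Set.mem_setOf_eq, Finset.mem_insert,
    Set.mem_insert_iff]
  constructor
  · rintro (h | h)
    · rcases Sym2.eq_iff.mp h with ⟨rfl, rfl⟩ | ⟨rfl, rfl⟩
      · exact Or.inl rfl
      · exact Or.inr (Or.inl rfl)
    · exact Or.inr (Or.inr h)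
  · rintro (rfl | rfl | h)
    · exact Or.inl rfl
    · exact Or.inl (by rw [Sym2.eq_swap])
    · exact Or.inr h

lemma FinGraph.addE_adj {p q : ℕ} :
    (G.addE u v hu hv huv).Adj p q ↔ G.Adj p q ∨ (p = u ∧ q = v) ∨ (p = v ∧ q = u) := by
  simp only [FinGraph.Adj, FinGraph.addE, Finset.mem_insert]
  constructor
  · rintro (h | h)
    · rcases Sym2.eq_iff.mp h with ⟨rfl, rfl⟩ | ⟨rfl, rfl⟩
      · exact Or.inr (Or.inl ⟨rfl, rfl⟩)
      · exact Or.inr (Or.inr ⟨rfl, rfl⟩)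
    · exact Or.inl h
  · rintro (h | ⟨rfl, rfl⟩ | ⟨rfl, rfl⟩)
    · exact Or.inr h
    · exact Or.inl rfl
    · exact Or.inl (by rw [Sym2.eq_swap])

lemma FinGraph.reach_mono {p q : ℕ} (h : G.Reach p q) :
    (G.addE u v hu hv huv).Reach p q := by
  refine Relation.ReflTransGen.mono ?_ _ _ h
  intro a b hab
  exact FinGraph.addE_adj.mpr (Or.inl hab)

lemma FinGraph.addE_reach {p q : ℕ} :
    (G.addE u v hu hv huv).Reach p q ↔
      G.Reach p q ∨ (G.Reach p u ∧ G.Reach v q) ∨ (G.Reach p v ∧ G.Reach u q) := by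
  constructor
  · intro h
    induction h with
    | refl => exact Or.inl Relation.ReflTransGen.refl
    | @tail b c hpb hbc ih =>
        rcases FinGraph.addE_adj.mp hbc with h | ⟨he1, he2⟩ | ⟨he1, he2⟩
        · rcases ih with h1 | ⟨h1, h2⟩ | ⟨h1, h2⟩
          · exact Or.inl (h1.tail h)
          · exact Or.inr (Or.inl ⟨h1, h2.tail h⟩)
          · exact Or.inr (Or.inr ⟨h1, h2.tail h⟩)
        · subst he1; subst he2
          rcases ih with h1 | ⟨h1, h2⟩ | ⟨h1, h2⟩
          · exact Or.inr (Or.inl ⟨h1, Relation.ReflTransGen.refl⟩)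
          · exact Or.inl (h1.trans (FinGraph.reach_symm h2))
          · exact Or.inl h1
        · subst he1; subst he2
          rcases ih with h1 | ⟨h1, h2⟩ | ⟨h1, h2⟩
          · exact Or.inr (Or.inr ⟨h1, Relation.ReflTransGen.refl⟩)
          · exact Or.inl h1
          · exact Or.inr (Or.inr ⟨h1, Relation.ReflTransGen.refl⟩)
  · have hadj : (G.addE u v hu hv huv).Reach u v :=
      Relation.ReflTransGen.single (FinGraph.addE_adj.mpr (Or.inr (Or.inl ⟨rfl, rfl⟩)))
    rintro (h | ⟨h1, h2⟩ | ⟨h1, h2⟩)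
    · exact FinGraph.reach_mono h
    · exact (FinGraph.reach_mono h1).trans (hadj.trans (FinGraph.reach_mono h2))
    · have hadj' : (G.addE u v hu hv huv).Reach v u :=
        Relation.ReflTransGen.single (FinGraph.addE_adj.mpr (Or.inr (Or.inr ⟨rfl, rfl⟩)))
      exact (FinGraph.reach_mono h1).trans (hadj'.trans (FinGraph.reach_mono h2))

end AddE
section Count

variable {G : FinGraph} {u v : ℕ} {hu : u ∈ G.verts} {hv : v ∈ G.verts} {huv : u ≠ v}

lemma FinGraph.compCount_addE_of_reach (h : G.Reach u v) :
    (G.addE u v hu hv huv).compCount = G.compCount := by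
  rw [FinGraph.compCount_eq, FinGraph.compCount_eq]
  congr 1
  have key : ∀ w, (G.addE u v hu hv huv).cset w = G.cset w := by
    intro w
    ext p
    simp only [FinGraph.cset, Set.mem_setOf_eq]
    rw [FinGraph.addE_reach]
    constructor
    · rintro (h1 | ⟨h1, h2⟩ | ⟨h1, h2⟩)
      · exact h1
      · exact (h1.trans h).trans h2
      · exact (h1.trans (FinGraph.reach_symm h)).trans h2
    · exact Or.inl
  show (G.addE u v hu hv huv).cset '' ↑(G.verts) = _
  rw [funext key]

lemma FinGraph.compCount_addE_of_not_reach (h : ¬ G.Reach u v) :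
    G.compCount = (G.addE u v hu hv huv).compCount + 1 := by
  rw [FinGraph.compCount_eq, FinGraph.compCount_eq]
  set A : Set (Set ℕ) := G.cset '' ↑G.verts with hA
  have hAfin : A.Finite := G.verts.finite_toSet.image _
  have key1 : ∀ w, G.Reach w u → (G.addE u v hu hv huv).cset w = G.cset u ∪ G.cset v := by
    intro w hwu
    ext p
    simp only [FinGraph.cset, Set.mem_setOf_eq, Set.mem_union]
    rw [FinGraph.addE_reach]
    constructor
    · rintro (h1 | ⟨h1, h2⟩ | ⟨h1, h2⟩)
      · exact Or.inl ((FinGraph.reach_symm hwu).trans h1)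
      · exact Or.inr h2
      · exact absurd (((FinGraph.reach_symm hwu).trans h1)) h
    · rintro (h1 | h1)
      · exact Or.inl (hwu.trans h1)
      · exact Or.inr (Or.inl ⟨hwu, h1⟩)
  have key2 : ∀ w, G.Reach w v → (G.addE u v hu hv huv).cset w = G.cset u ∪ G.cset v := by
    intro w hwv
    ext p
    simp only [FinGraph.cset, Set.mem_setOf_eq, Set.mem_union]
    rw [FinGraph.addE_reach]
    constructor
    · rintro (h1 | ⟨h1, h2⟩ | ⟨h1, h2⟩)
      · exact Or.inr ((FinGraph.reach_symm hwv).trans h1)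
      · exact absurd (FinGraph.reach_symm ((FinGraph.reach_symm hwv).trans h1)) h
      · exact Or.inl h2
    · rintro (h1 | h1)
      · exact Or.inr (Or.inr ⟨hwv, h1⟩)
      · exact Or.inl (hwv.trans h1)
  have key3 : ∀ w, ¬ G.Reach w u → ¬ G.Reach w v →
      (G.addE u v hu hv huv).cset w = G.cset w := by
    intro w h1 h2
    ext p
    simp only [FinGraph.cset, Set.mem_setOf_eq]
    rw [FinGraph.addE_reach]
    constructor
    · rintro (hh | ⟨hh1, hh2⟩ | ⟨hh1, hh2⟩)
      · exact hh
      · exact absurd hh1 h1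
      · exact absurd hh1 h2
    · exact Or.inl
  have hsetEq : (G.addE u v hu hv huv).cset '' ↑(G.addE u v hu hv huv).verts =
      insert (G.cset u ∪ G.cset v) (A \ {G.cset u, G.cset v}) := by
    ext S
    constructor
    · rintro ⟨w, hw, rfl⟩
      by_cases hwu : G.Reach w u
      · rw [key1 w hwu]; exact Set.mem_insert _ _
      by_cases hwv : G.Reach w v
      · rw [key2 w hwv]; exact Set.mem_insert _ _
      · rw [key3 w hwu hwv]
        refine Set.mem_insert_of_mem _ ⟨⟨w, hw, rfl⟩, ?_⟩
        rintro (hh | hh)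
        · exact hwu (FinGraph.reach_of_cset_eq hh)
        · exact hwv (FinGraph.reach_of_cset_eq hh)
    · rintro (rfl | ⟨⟨w, hw, rfl⟩, hS⟩)
      · exact ⟨u, hu, key1 u Relation.ReflTransGen.refl⟩
      · refine ⟨w, hw, key3 w ?_ ?_⟩
        · intro hh; exact hS (Or.inl (FinGraph.cset_eq_of_reach hh))
        · intro hh; exact hS (Or.inr (FinGraph.cset_eq_of_reach hh))
  rw [hsetEq]
  have hin_u : G.cset u ∈ A := ⟨u, hu, rfl⟩
  have hin_v : G.cset v ∈ A := ⟨v, hv, rfl⟩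
  have hne_uv : G.cset u ≠ G.cset v := fun hh => h (FinGraph.reach_of_cset_eq hh)
  have hnotin : G.cset u ∪ G.cset v ∉ A \ {G.cset u, G.cset v} := by
    rintro ⟨⟨w, hw, hEq⟩, hS⟩
    have hwu : G.Reach w u := by
      have : u ∈ G.cset w := hEq.symm ▸ Or.inl Relation.ReflTransGen.refl
      exact this
    have h1 : G.cset w = G.cset u := FinGraph.cset_eq_of_reach hwu
    have : v ∈ G.cset u := by
      rw [← h1, hEq]; exact Or.inr Relation.ReflTransGen.refl
    exact h this
  rw [Set.ncard_insert_of_notMem hnotin (hAfin.diff)]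
  have hAeq : A = insert (G.cset u) (insert (G.cset v) (A \ {G.cset u, G.cset v})) := by
    ext S
    simp only [Set.mem_insert_iff, Set.mem_diff, Set.mem_singleton_iff]
    constructor
    · intro hS
      by_cases h1 : S = G.cset u
      · exact Or.inl h1
      by_cases h2 : S = G.cset v
      · exact Or.inr (Or.inl h2)
      · exact Or.inr (Or.inr ⟨hS, by rintro (hh | hh) <;> [exact h1 hh; exact h2 hh]⟩)
    · rintro (rfl | rfl | ⟨hS, -⟩)
      · exact hin_u
      · exact hin_v
      · exact hS
  have hv_not : G.cset v ∉ A \ {G.cset u, G.cset v} := by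
    rintro ⟨-, hS⟩; exact hS (Or.inr rfl)
  have hu_not : G.cset u ∉ insert (G.cset v) (A \ {G.cset u, G.cset v}) := by
    rintro (hh | ⟨-, hS⟩)
    · exact hne_uv hh
    · exact hS (Or.inl rfl)
  conv_lhs => rw [hAeq]
  rw [Set.ncard_insert_of_notMem hu_not ((hAfin.diff).insert _),
    Set.ncard_insert_of_notMem hv_not (hAfin.diff)]

lemma FinGraph.isol_mem_iff {w : ℕ} :
    w ∈ G.verts.filter (fun x => ∀ e ∈ G.edges, x ∉ e) ↔
      w ∈ G.verts ∧ ¬ G.HasDart w := by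
  rw [Finset.mem_filter, FinGraph.hasDart_iff, not_not]

lemma FinGraph.isolCount_addE_of_hasDart (hdu : G.HasDart u) (hdv : G.HasDart v) :
    (G.addE u v hu hv huv).isolCount = G.isolCount := by
  unfold FinGraph.isolCount
  congr 1
  apply Finset.filter_congr
  intro w hw
  show (∀ e ∈ (G.addE u v hu hv huv).edges, w ∉ e) ↔ _
  constructor
  · intro hh e he
    exact hh e (Finset.mem_insert_of_mem he)
  · intro hh e he
    rcases Finset.mem_insert.mp he with rfl | he'
    · intro hmem
      rcases Sym2.mem_iff.mp hmem with rfl | rfl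
      · rw [FinGraph.hasDart_iff] at hdu; exact hdu hh
      · rw [FinGraph.hasDart_iff] at hdv; exact hdv hh
    · exact hh e he'

lemma FinGraph.addE_filter_isol (hdu' : ¬ G.HasDart u) :
    (G.addE u v hu hv huv).verts.filter (fun x => ∀ e ∈ (G.addE u v hu hv huv).edges, x ∉ e)
      = ((G.verts.filter (fun x => ∀ e ∈ G.edges, x ∉ e)).erase u).filter
          (fun x => x ≠ v) := by
  ext w
  rw [Finset.mem_filter, Finset.mem_filter, Finset.mem_erase, Finset.mem_filter]
  show (w ∈ G.verts ∧ ∀ e ∈ insert s(u,v) G.edges, w ∉ e) ↔ _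
  constructor
  · rintro ⟨hw, hh⟩
    have hnew := hh s(u, v) (Finset.mem_insert_self _ _)
    refine ⟨⟨?_, hw, fun e he => hh e (Finset.mem_insert_of_mem he)⟩, ?_⟩
    · intro hwu; subst hwu; exact hnew (Sym2.mem_mk_left _ _)
    · intro hwv; subst hwv; exact hnew (Sym2.mem_mk_right _ _)
  · rintro ⟨⟨hwu, hw, hh⟩, hwv⟩
    refine ⟨hw, ?_⟩
    intro e he
    rcases Finset.mem_insert.mp he with rfl | he'
    · intro hmem
      rcases Sym2.mem_iff.mp hmem with rfl | rfl
      · exact hwu rfl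
      · exact hwv rfl
    · exact hh e he'

lemma FinGraph.isolCount_addE_left (hdu' : ¬ G.HasDart u) (hdv : G.HasDart v) :
    G.isolCount = (G.addE u v hu hv huv).isolCount + 1 := by
  unfold FinGraph.isolCount
  rw [FinGraph.addE_filter_isol hdu']
  have hfil : ((G.verts.filter (fun x => ∀ e ∈ G.edges, x ∉ e)).erase u).filter
      (fun x => x ≠ v) = (G.verts.filter (fun x => ∀ e ∈ G.edges, x ∉ e)).erase u := by
    apply Finset.filter_true_of_mem
    intro w hw
    obtain ⟨h1, h2⟩ := Finset.mem_erase.mp hw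
    intro hwv; subst hwv
    exact (FinGraph.isol_mem_iff.mp h2).2 hdv
  have hu_mem : u ∈ G.verts.filter (fun x => ∀ e ∈ G.edges, x ∉ e) :=
    FinGraph.isol_mem_iff.mpr ⟨hu, hdu'⟩
  rw [hfil, Finset.card_erase_of_mem hu_mem]
  have hpos : 0 < (G.verts.filter (fun x => ∀ e ∈ G.edges, x ∉ e)).card :=
    Finset.card_pos.mpr ⟨u, hu_mem⟩
  omega

lemma FinGraph.isolCount_addE_both (hdu' : ¬ G.HasDart u) (hdv' : ¬ G.HasDart v) :
    G.isolCount = (G.addE u v hu hv huv).isolCount + 2 := by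
  unfold FinGraph.isolCount
  rw [FinGraph.addE_filter_isol hdu']
  have hfil : ((G.verts.filter (fun x => ∀ e ∈ G.edges, x ∉ e)).erase u).filter
      (fun x => x ≠ v) = ((G.verts.filter (fun x => ∀ e ∈ G.edges, x ∉ e)).erase u).erase
        v := by
    ext w
    simp only [Finset.mem_filter, Finset.mem_erase]
    tauto
  have hu_mem : u ∈ G.verts.filter (fun x => ∀ e ∈ G.edges, x ∉ e) :=
    FinGraph.isol_mem_iff.mpr ⟨hu, hdu'⟩
  have hv_mem : v ∈ (G.verts.filter (fun x => ∀ e ∈ G.edges, x ∉ e)).erase u :=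
    Finset.mem_erase.mpr ⟨huv.symm, FinGraph.isol_mem_iff.mpr ⟨hv, hdv'⟩⟩
  rw [hfil, Finset.card_erase_of_mem hv_mem, Finset.card_erase_of_mem hu_mem]
  have h3 : 1 < (G.verts.filter (fun x => ∀ e ∈ G.edges, x ∉ e)).card :=
    Finset.one_lt_card.mpr ⟨u, hu_mem, v, FinGraph.isol_mem_iff.mpr ⟨hv, hdv'⟩, huv⟩
  omega

lemma FinGraph.addE_edges_card (hne : s(u, v) ∉ G.edges) :
    (G.addE u v hu hv huv).edges.card = G.edges.card + 1 :=
  Finset.card_insert_of_notMem hne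

end Count
section SurgeryHelpers

/-- Insert the new dart `ε` after `dz` in a rotation `r`. -/
def rIns (r : ℕ × ℕ → ℕ × ℕ) (dz ε : ℕ × ℕ) : ℕ × ℕ → ℕ × ℕ :=
  fun d => if d = dz then ε else if d = ε then r dz else r d

lemma rIns_at (r : ℕ × ℕ → ℕ × ℕ) (dz ε : ℕ × ℕ) : rIns r dz ε dz = ε := by
  simp [rIns]

lemma rIns_new (r : ℕ × ℕ → ℕ × ℕ) {dz ε : ℕ × ℕ} (h : ε ≠ dz) : rIns r dz ε ε = r dz := by
  simp [rIns, h]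

lemma rIns_other (r : ℕ × ℕ → ℕ × ℕ) {dz ε d : ℕ × ℕ} (h1 : d ≠ dz) (h2 : d ≠ ε) :
    rIns r dz ε d = r d := by
  simp [rIns, h1, h2]

lemma bijOn_insert_fixed {α : Type*} {s : Set α} {f g : α → α} {c : α}
    (hf : Set.BijOn f s s) (hc : c ∉ s) (hgc : g c = c) (hg : ∀ d ∈ s, g d = f d) :
    Set.BijOn g (insert c s) (insert c s) := by
  refine ⟨?_, ?_, ?_⟩
  · rintro d (rfl | hd)
    · rw [hgc]; exact Set.mem_insert _ _
    · rw [hg d hd]; exact Set.mem_insert_of_mem _ (hf.mapsTo hd)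
  · rintro d₁ (rfl | h₁) d₂ (rfl | h₂) heq
    · rfl
    · rw [hgc, hg d₂ h₂] at heq
      exact absurd (heq ▸ hf.mapsTo h₂) hc
    · rw [hgc, hg d₁ h₁] at heq
      exact absurd (heq.symm ▸ hf.mapsTo h₁) hc
    · rw [hg d₁ h₁, hg d₂ h₂] at heq
      exact hf.injOn h₁ h₂ heq
  · rintro y (rfl | hy)
    · exact ⟨_, Set.mem_insert _ _, hgc⟩
    · obtain ⟨d, hd, hdy⟩ := hf.surjOn hy
      exact ⟨d, Set.mem_insert_of_mem _ hd, by rw [hg d hd, hdy]⟩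

lemma FinGraph.reach_of_mem_orb {G : FinGraph} (R : Rot G) {d d' : ℕ × ℕ} (hd : d ∈ G.darts)
    (h : d' ∈ orb (faceMap R) d) : G.Reach d.2 d'.2 := by
  obtain ⟨n, rfl⟩ := h
  induction n with
  | zero => exact Relation.ReflTransGen.refl
  | succ n ih =>
      have hz : (faceMap R)^[n] d ∈ G.darts := iterate_mem (faceMap_bijOn R).mapsTo hd n
      have hz' : (faceMap R)^[n + 1] d ∈ G.darts :=
        iterate_mem (faceMap_bijOn R).mapsTo hd (n + 1)
      have hadj : G.Adj ((faceMap R)^[n + 1] d).1 ((faceMap R)^[n + 1] d).2 := hz'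
      have hfst : ((faceMap R)^[n + 1] d).1 = ((faceMap R)^[n] d).2 := by
        rw [Function.iterate_succ_apply']
        exact fst_faceMap R hz
      rw [hfst] at hadj
      exact ih.tail hadj

lemma eulerVal_eq (G : FinGraph) (R : Rot G) :
    eulerVal G R = 2 * (G.compCount : ℤ) - G.verts.card + G.edges.card
      - (orbs (faceMap R) G.darts).ncard - G.isolCount := by
  unfold eulerVal
  rw [faceCount_eq]
  push_cast
  ring

lemma FinGraph.mem_darts_iff {G : FinGraph} {p : ℕ × ℕ} : p ∈ G.darts ↔ s(p.1, p.2) ∈ G.edges :=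
  Iff.rfl

lemma FinGraph.hasDart_of_fst {G : FinGraph} {d : ℕ × ℕ} (hd : d ∈ G.darts) : G.HasDart d.1 :=
  ⟨d.2, by rwa [show (d.1, d.2) = d from Prod.mk.eta]⟩

lemma FinGraph.hasDart_of_snd {G : FinGraph} {d : ℕ × ℕ} (hd : d ∈ G.darts) : G.HasDart d.2 :=
  ⟨d.1, FinGraph.swap_mem_darts hd⟩

end SurgeryHelpers
section SurgeryNN

variable {G : FinGraph} {u v : ℕ} {hu : u ∈ G.verts} {hv : v ∈ G.verts} {huv : u ≠ v}

lemma surgeryNN (hne : s(u, v) ∉ G.edges) (R : Rot G) (du dv : ℕ × ℕ)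
    (hdu : du ∈ G.darts) (hdv : dv ∈ G.darts) (hdu1 : du.1 = u) (hdv1 : dv.1 = v) :
    ∃ R' : Rot (G.addE u v hu hv huv),
      (Prod.swap dv ∈ orb (faceMap R) (Prod.swap du) →
        eulerVal _ R' = eulerVal G R) ∧
      (Prod.swap dv ∉ orb (faceMap R) (Prod.swap du) → G.Reach u v →
        eulerVal _ R' = eulerVal G R + 2) ∧
      (¬ G.Reach u v → eulerVal _ R' = eulerVal G R) := by
  classical
  set D := G.darts with hD
  have hDfin : D.Finite := G.darts_finite
  set e : ℕ × ℕ := (u, v) with he_def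
  set e' : ℕ × ℕ := (v, u) with he'_def
  have he_not : e ∉ D := fun h => hne h
  have he'_not : e' ∉ D := by
    intro h
    exact hne (by rwa [FinGraph.mem_darts_iff, Sym2.eq_swap] at h)
  have hee' : e ≠ e' := by
    intro h; exact huv (show u = v from congrArg Prod.fst h)
  have hdu_e : du ≠ e := fun h => he_not (h ▸ hdu)
  have hdu_e' : du ≠ e' := fun h => he'_not (h ▸ hdu)
  have hdv_e : dv ≠ e := fun h => he_not (h ▸ hdv)
  have hdv_e' : dv ≠ e' := fun h => he'_not (h ▸ hdv)
  have hdudv : du ≠ dv := fun h => huv (hdu1 ▸ hdv1 ▸ congrArg Prod.fst h)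
  -- the new rotation
  set r1 : ℕ × ℕ → ℕ × ℕ := rIns R.r du e with hr1
  set r' : ℕ × ℕ → ℕ × ℕ := rIns r1 dv e' with hr'
  have hr1_du : r1 du = e := rIns_at _ _ _
  have hr1_e : r1 e = R.r du := rIns_new _ hdu_e.symm
  have hr1_other : ∀ d, d ≠ du → d ≠ e → r1 d = R.r d := fun d h1 h2 => rIns_other _ h1 h2
  have hr'_dv : r' dv = e' := rIns_at _ _ _
  have hr'_e' : r' e' = R.r dv := by
    rw [hr', rIns_new _ hdv_e'.symm, hr1_other dv hdudv.symm hdv_e]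
  have hr'_du : r' du = e := by
    rw [hr', rIns_other _ hdudv hdu_e', hr1_du]
  have hr'_e : r' e = R.r du := by
    rw [hr', rIns_other _ hdv_e.symm hee', hr1_e]
  have hr'_other : ∀ d, d ≠ du → d ≠ dv → d ≠ e → d ≠ e' → r' d = R.r d := by
    intro d h1 h2 h3 h4
    rw [hr', rIns_other _ h2 h4, hr1_other d h1 h3]
  -- bijectivity
  have hb1 : Set.BijOn r1 (insert e D) (insert e D) :=
    ins_bijOn R.bij hdu he_not hr1_du hr1_e
      (fun d hd hdne => hr1_other d hdne (fun h => he_not (h ▸ hd)))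
  have he'_not1 : e' ∉ insert e D := by
    rintro (h | h)
    · exact hee' h.symm
    · exact he'_not h
  have hb2 : Set.BijOn r' (insert e' (insert e D)) (insert e' (insert e D)) := by
    refine ins_bijOn hb1 (Set.mem_insert_of_mem _ hdv) he'_not1 hr'_dv ?_ ?_
    · rw [hr'_e', hr1_other dv hdudv.symm hdv_e]
    · intro d hd hdne
      rw [hr', rIns_other _ hdne (fun h => he'_not1 (by rw [← h]; exact hd))]
  have hdarts : (G.addE u v hu hv huv).darts = insert e' (insert e D) := by
    rw [FinGraph.addE_darts, Set.insert_comm]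
  -- the Rot structure
  have hfix : ∀ d ∈ (G.addE u v hu hv huv).darts, (r' d).1 = d.1 := by
    intro d hd
    rw [hdarts] at hd
    rcases hd with rfl | rfl | hd
    · rw [hr'_e', R.fix dv hdv, hdv1]
    · rw [hr'_e, R.fix du hdu, hdu1, he_def]
    · by_cases h1 : d = du
      · subst h1; rw [hr'_du, he_def, hdu1]
      by_cases h2 : d = dv
      · subst h2; rw [hr'_dv, he'_def, hdv1]
      · rw [hr'_other d h1 h2 (fun h => he_not (h ▸ hd)) (fun h => he'_not (h ▸ hd)),
          R.fix d hd]
  have hdartsAt_u : ∀ d ∈ (G.addE u v hu hv huv).darts, d.1 = u →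
      d = e ∨ d ∈ G.dartsAt u := by
    intro d hd h1
    rw [hdarts] at hd
    rcases hd with rfl | rfl | hd
    · exact absurd (show v = u from h1) (Ne.symm huv)
    · exact Or.inl rfl
    · exact Or.inr ⟨hd, h1⟩
  have hdartsAt_v : ∀ d ∈ (G.addE u v hu hv huv).darts, d.1 = v →
      d = e' ∨ d ∈ G.dartsAt v := by
    intro d hd h1
    rw [hdarts] at hd
    rcases hd with rfl | rfl | hd
    · exact Or.inl rfl
    · exact absurd (show u = v from h1) huv
    · exact Or.inr ⟨hd, h1⟩
  have hdartsAt_w : ∀ w, w ≠ u → w ≠ v → ∀ d ∈ (G.addE u v hu hv huv).darts, d.1 = w →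
      d ∈ G.dartsAt w := by
    intro w hw1 hw2 d hd h1
    rw [hdarts] at hd
    rcases hd with rfl | rfl | hd
    · exact absurd (show w = v from h1.symm) hw2
    · exact absurd (show w = u from h1.symm) hw1
    · exact ⟨hd, h1⟩
  -- rotation cycles
  have hsu_fin : (G.dartsAt u).Finite := G.dartsAt_finite u
  have hsv_fin : (G.dartsAt v).Finite := G.dartsAt_finite v
  have hdu_at : du ∈ G.dartsAt u := ⟨hdu, hdu1⟩
  have hdv_at : dv ∈ G.dartsAt v := ⟨hdv, hdv1⟩
  have he_not_at : e ∉ G.dartsAt u := fun h => he_not h.1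
  have he'_not_at : e' ∉ G.dartsAt v := fun h => he'_not h.1
  have hfd_u : ∀ d ∈ G.dartsAt u, d ≠ du → r' d = R.r d := by
    rintro d ⟨hd, hd1⟩ hdne
    refine hr'_other d hdne (fun h => huv ?_) (fun h => he_not (h ▸ hd))
      (fun h => he'_not (h ▸ hd))
    rw [← hd1, h, hdv1]
  have hfd_v : ∀ d ∈ G.dartsAt v, d ≠ dv → r' d = R.r d := by
    rintro d ⟨hd, hd1⟩ hdne
    refine hr'_other d (fun h => huv ?_) hdne (fun h => he_not (h ▸ hd))
      (fun h => he'_not (h ▸ hd))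
    rw [← hdu1, ← h]; exact hd1
  have hcyc : ∀ d ∈ (G.addE u v hu hv huv).darts, ∀ d' ∈ (G.addE u v hu hv huv).darts,
      d.1 = d'.1 → ∃ n, r'^[n] d = d' := by
    intro d hd d' hd' hsame
    by_cases hw1 : d.1 = u
    · -- vertex u
      have horb_mem : ∀ x ∈ G.dartsAt u, du ∈ orb R.r x := by
        rintro x ⟨hx, hx1⟩
        obtain ⟨n, hn⟩ := R.cyc x hx du hdu (by rw [hx1, hdu1])
        exact ⟨n, hn⟩
      have key : ∀ x ∈ G.dartsAt u, orb r' x = insert e (orb R.r x) := by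
        intro x hx
        exact ins_orb_of_mem hsu_fin (R.bijOn_dartsAt u) hdu_at he_not_at hr'_du
          (by rw [hr'_e]) hfd_u hx (horb_mem x hx)
      have keye : orb r' e = insert e (orb R.r du) :=
        ins_orb_e hsu_fin (R.bijOn_dartsAt u) hdu_at he_not_at hr'_du
          (by rw [hr'_e]) hfd_u
      rcases hdartsAt_u d hd hw1 with rfl | hd_at
      · rcases hdartsAt_u d' hd' (hsame ▸ hw1) with rfl | hd'_at
        · exact ⟨0, rfl⟩
        · have : d' ∈ orb r' e := by
            rw [keye]
            obtain ⟨n, hn⟩ := R.cyc du hdu d' hd'_at.1 (by rw [hdu1, hd'_at.2])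
            exact Set.mem_insert_of_mem _ ⟨n, hn⟩
          exact this
      · rcases hdartsAt_u d' hd' (hsame ▸ hw1) with rfl | hd'_at
        · have : e ∈ orb r' d := by rw [key d hd_at]; exact Set.mem_insert _ _
          exact this
        · have : d' ∈ orb r' d := by
            rw [key d hd_at]
            obtain ⟨n, hn⟩ := R.cyc d hd_at.1 d' hd'_at.1 (by rw [hd_at.2, hd'_at.2])
            exact Set.mem_insert_of_mem _ ⟨n, hn⟩
          exact this
    by_cases hw2 : d.1 = v
    · -- vertex v
      have horb_mem : ∀ x ∈ G.dartsAt v, dv ∈ orb R.r x := by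
        rintro x ⟨hx, hx1⟩
        obtain ⟨n, hn⟩ := R.cyc x hx dv hdv (by rw [hx1, hdv1])
        exact ⟨n, hn⟩
      have key : ∀ x ∈ G.dartsAt v, orb r' x = insert e' (orb R.r x) := by
        intro x hx
        exact ins_orb_of_mem hsv_fin (R.bijOn_dartsAt v) hdv_at he'_not_at hr'_dv
          (by rw [hr'_e']) hfd_v hx (horb_mem x hx)
      have keye : orb r' e' = insert e' (orb R.r dv) :=
        ins_orb_e hsv_fin (R.bijOn_dartsAt v) hdv_at he'_not_at hr'_dv
          (by rw [hr'_e']) hfd_v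
      rcases hdartsAt_v d hd hw2 with rfl | hd_at
      · rcases hdartsAt_v d' hd' (hsame ▸ hw2) with rfl | hd'_at
        · exact ⟨0, rfl⟩
        · have : d' ∈ orb r' e' := by
            rw [keye]
            obtain ⟨n, hn⟩ := R.cyc dv hdv d' hd'_at.1 (by rw [hdv1, hd'_at.2])
            exact Set.mem_insert_of_mem _ ⟨n, hn⟩
          exact this
      · rcases hdartsAt_v d' hd' (hsame ▸ hw2) with rfl | hd'_at
        · have : e' ∈ orb r' d := by rw [key d hd_at]; exact Set.mem_insert _ _
          exact this
        · have : d' ∈ orb r' d := by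
            rw [key d hd_at]
            obtain ⟨n, hn⟩ := R.cyc d hd_at.1 d' hd'_at.1 (by rw [hd_at.2, hd'_at.2])
            exact Set.mem_insert_of_mem _ ⟨n, hn⟩
          exact this
    · -- other vertices
      have hd_at := hdartsAt_w d.1 hw1 hw2 d hd rfl
      have hd'_at := hdartsAt_w d.1 hw1 hw2 d' hd' hsame.symm
      have hcongr : orb R.r d = orb r' d := by
        apply orb_congr (R.bijOn_dartsAt d.1).mapsTo _ hd_at
        rintro y ⟨hy, hy1⟩
        refine (hr'_other y (fun h => hw1 ?_) (fun h => hw2 ?_)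
          (fun h => he_not (h ▸ hy)) (fun h => he'_not (h ▸ hy))).symm
        · rw [← hy1, h, hdu1]
        · rw [← hy1, h, hdv1]
      obtain ⟨n, hn⟩ := R.cyc d hd_at.1 d' hd'_at.1 hsame
      have : d' ∈ orb r' d := hcongr ▸ ⟨n, hn⟩
      exact this
  set R' : Rot (G.addE u v hu hv huv) :=
    { r := r'
      bij := by rw [hdarts]; exact hb2
      fix := hfix
      cyc := hcyc } with hR'
  refine ⟨R', ?_⟩
  -- face analysis
  set F : ℕ × ℕ → ℕ × ℕ := faceMap R with hF
  set A : ℕ × ℕ := Prod.swap du with hA_def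
  set B : ℕ × ℕ := Prod.swap dv with hB_def
  have hA : A ∈ D := FinGraph.swap_mem_darts hdu
  have hB : B ∈ D := FinGraph.swap_mem_darts hdv
  have hAB : A ≠ B := by
    intro h
    exact hdudv (by rw [← Prod.swap_swap du, ← Prod.swap_swap dv, ← hA_def, ← hB_def, h])
  have hA_e : A ≠ e := fun h => he_not (h ▸ hA)
  have hA_e' : A ≠ e' := fun h => he'_not (h ▸ hA)
  have hB_e : B ≠ e := fun h => he_not (h ▸ hB)
  have hB_e' : B ≠ e' := fun h => he'_not (h ▸ hB)
  set T : ℕ × ℕ → ℕ × ℕ := swp F A B with hT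
  have hTbij : Set.BijOn T D D := swp_bijOn (faceMap_bijOn R) hA hB
  -- values of F' := faceMap R'
  set F' : ℕ × ℕ → ℕ × ℕ := faceMap R' with hF'
  have hswapA : (A.2, A.1) = du := by rw [hA_def]; exact Prod.mk.eta
  have hswapB : (B.2, B.1) = dv := by rw [hB_def]; exact Prod.mk.eta
  have hF'_A : F' A = e := by
    show r' (A.2, A.1) = e
    rw [hswapA, hr'_du]
  have hF'_B : F' B = e' := by
    show r' (B.2, B.1) = e'
    rw [hswapB, hr'_dv]
  have hFA : F A = R.r du := by
    show R.r (A.2, A.1) = R.r du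
    rw [hswapA]
  have hFB : F B = R.r dv := by
    show R.r (B.2, B.1) = R.r dv
    rw [hswapB]
  have hF'_e : F' e = F B := by
    show r' (e.2, e.1) = F B
    rw [show (e.2, e.1) = e' from rfl, hr'_e', hFB]
  have hF'_e' : F' e' = F A := by
    show r' (e'.2, e'.1) = F A
    rw [show (e'.2, e'.1) = e from rfl, hr'_e, hFA]
  have hF'_other : ∀ d ∈ D, d ≠ A → d ≠ B → F' d = F d := by
    intro d hd h1 h2
    show r' (d.2, d.1) = F d
    have hsw : (d.2, d.1) ∈ D := FinGraph.swap_mem_darts hd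
    rw [hr'_other (d.2, d.1) ?_ ?_ (fun h => he_not (h ▸ hsw)) (fun h => he'_not (h ▸ hsw))]
    · rfl
    · intro h
      apply h1
      rw [hA_def, ← h]
      rfl
    · intro h
      apply h2
      rw [hB_def, ← h]
      rfl
  -- intermediate face map
  set f1 : ℕ × ℕ → ℕ × ℕ := rIns T A e with hf1
  have hf1_A : f1 A = e := rIns_at _ _ _
  have hf1_e : f1 e = T A := rIns_new _ (Ne.symm hA_e)
  have hf1_other : ∀ d, d ≠ A → d ≠ e → f1 d = T d := fun d h1 h2 => rIns_other _ h1 h2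
  have hn1 : (orbs f1 (insert e D)).ncard = (orbs T D).ncard :=
    ins_ncard hDfin hTbij hA he_not hf1_A hf1_e
      (fun d hd h1 => hf1_other d h1 (fun h => he_not (h ▸ hd)))
  have hb1f : Set.BijOn f1 (insert e D) (insert e D) :=
    ins_bijOn hTbij hA he_not hf1_A hf1_e
      (fun d hd h1 => hf1_other d h1 (fun h => he_not (h ▸ hd)))
  have hTA : T A = F B := swp_apply_a F A B
  have hTB : T B = F A := swp_apply_b F A B
  have hn2 : (orbs F' (insert e' (insert e D))).ncard = (orbs f1 (insert e D)).ncard := by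
    refine ins_ncard (hDfin.insert e) hb1f (Set.mem_insert_of_mem _ hB) he'_not1
      hF'_B ?_ ?_
    · rw [hF'_e', hf1_other B hAB.symm hB_e, hTB]
    · rintro d (rfl | hd) h1
      · rw [hF'_e, hf1_e, hTA]
      · by_cases h2 : d = A
        · subst h2; rw [hF'_A, hf1_A]
        · rw [hF'_other d hd h2 h1, hf1_other d h2 (fun h => he_not (h ▸ hd))]
          exact (swp_apply_other F h2 h1).symm
  have hface : (orbs F' (G.addE u v hu hv huv).darts).ncard = (orbs T D).ncard := by
    rw [hdarts, hn2, hn1]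
  -- counting conclusions
  have hm : ((G.addE u v hu hv huv).edges.card : ℤ) = G.edges.card + 1 := by
    exact_mod_cast FinGraph.addE_edges_card hne
  have hnn : (G.addE u v hu hv huv).verts.card = G.verts.card := rfl
  have hisol : (G.addE u v hu hv huv).isolCount = G.isolCount :=
    FinGraph.isolCount_addE_of_hasDart (by rw [← hdu1]; exact FinGraph.hasDart_of_fst hdu)
      (by rw [← hdv1]; exact FinGraph.hasDart_of_fst hdv)
  have hA2 : A.2 = u := by rw [hA_def]; exact hdu1
  have hB2 : B.2 = v := by rw [hB_def]; exact hdv1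
  refine ⟨?_, ?_, ?_⟩
  · -- same face
    intro hsame
    have hreach : G.Reach u v := by
      have := FinGraph.reach_of_mem_orb R hA hsame
      rwa [hA2, hB2] at this
    have hcomp : (G.addE u v hu hv huv).compCount = G.compCount :=
      FinGraph.compCount_addE_of_reach hreach
    have hfcount : (orbs T D).ncard = (orbs F D).ncard + 1 :=
      swp_ncard_same hDfin (faceMap_bijOn R) hA hB hAB hsame
    rw [eulerVal_eq, eulerVal_eq, hface, hcomp, hisol, hm, hnn,
      show orbs (faceMap R) G.darts = orbs F D from rfl]
    have : ((orbs T D).ncard : ℤ) = (orbs F D).ncard + 1 := by exact_mod_cast hfcount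
    rw [this]
    push_cast
    ring
  · -- different faces, connected
    intro hdiff hreach
    have hcomp : (G.addE u v hu hv huv).compCount = G.compCount :=
      FinGraph.compCount_addE_of_reach hreach
    have hfcount : (orbs T D).ncard + 1 = (orbs F D).ncard :=
      swp_ncard_diff hDfin (faceMap_bijOn R) hA hB hAB hdiff
    rw [eulerVal_eq, eulerVal_eq, hface, hcomp, hisol, hm, hnn,
      show orbs (faceMap R) G.darts = orbs F D from rfl]
    have : ((orbs T D).ncard : ℤ) + 1 = (orbs F D).ncard := by exact_mod_cast hfcount
    push_cast
    omega
  · -- not connected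
    intro hnreach
    have hdiff : B ∉ orb F A := by
      intro h
      have := FinGraph.reach_of_mem_orb R hA h
      rw [hA2, hB2] at this
      exact hnreach this
    have hcomp : G.compCount = (G.addE u v hu hv huv).compCount + 1 :=
      FinGraph.compCount_addE_of_not_reach hnreach
    have hfcount : (orbs T D).ncard + 1 = (orbs F D).ncard :=
      swp_ncard_diff hDfin (faceMap_bijOn R) hA hB hAB hdiff
    rw [eulerVal_eq, eulerVal_eq, hface, hisol, hm, hnn,
      show orbs (faceMap R) G.darts = orbs F D from rfl]
    have h1 : ((orbs T D).ncard : ℤ) + 1 = (orbs F D).ncard := by exact_mod_cast hfcount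
    have h2 : (G.compCount : ℤ) = (G.addE u v hu hv huv).compCount + 1 := by
      exact_mod_cast hcomp
    push_cast
    omega

end SurgeryNN
section SurgeryIso

variable {G : FinGraph} {u v : ℕ} {hu : u ∈ G.verts} {hv : v ∈ G.verts} {huv : u ≠ v}

lemma surgeryIso (hne : s(u, v) ∉ G.edges) (R : Rot G) (hdu' : ¬ G.HasDart u)
    (dv : ℕ × ℕ) (hdv : dv ∈ G.darts) (hdv1 : dv.1 = v) :
    ∃ R' : Rot (G.addE u v hu hv huv), eulerVal _ R' = eulerVal G R := by
  classical
  set D := G.darts with hD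
  have hDfin : D.Finite := G.darts_finite
  set e : ℕ × ℕ := (u, v) with he_def
  set e' : ℕ × ℕ := (v, u) with he'_def
  have he_not : e ∉ D := fun h => hne h
  have he'_not : e' ∉ D := by
    intro h
    exact hne (by rwa [FinGraph.mem_darts_iff, Sym2.eq_swap] at h)
  have hee' : e ≠ e' := by
    intro h; exact huv (show u = v from congrArg Prod.fst h)
  have hdv_e : dv ≠ e := fun h => he_not (h ▸ hdv)
  have hdv_e' : dv ≠ e' := fun h => he'_not (h ▸ hdv)
  set r' : ℕ × ℕ → ℕ × ℕ := fun d => if d = e then e else rIns R.r dv e' d with hr'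
  have hr'_e : r' e = e := by simp [hr']
  have hr'_dv : r' dv = e' := by
    simp only [hr']; rw [if_neg hdv_e, rIns_at]
  have hr'_e' : r' e' = R.r dv := by
    simp only [hr']; rw [if_neg (Ne.symm hee'), rIns_new _ hdv_e'.symm]
  have hr'_other : ∀ d, d ≠ dv → d ≠ e → d ≠ e' → r' d = R.r d := by
    intro d h1 h2 h3
    simp only [hr']; rw [if_neg h2, rIns_other _ h1 h3]
  have he'_notI : e' ∉ insert e' D → False := fun h => h (Set.mem_insert _ _)
  have hb1 : Set.BijOn (rIns R.r dv e') (insert e' D) (insert e' D) :=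
    ins_bijOn R.bij hdv he'_not (rIns_at _ _ _) (rIns_new _ hdv_e'.symm)
      (fun d hd h1 => rIns_other _ h1 (fun h => he'_not (h ▸ hd)))
  have he_notI : e ∉ insert e' D := by
    rintro (h | h)
    · exact hee' h
    · exact he_not h
  have hb2 : Set.BijOn r' (insert e (insert e' D)) (insert e (insert e' D)) := by
    refine bijOn_insert_fixed hb1 he_notI hr'_e ?_
    intro d hd
    simp only [hr']
    rw [if_neg (show d ≠ e from fun h => he_notI (by rw [← h]; exact hd))]
  have hdarts : (G.addE u v hu hv huv).darts = insert e (insert e' D) :=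
    FinGraph.addE_darts
  have hfix : ∀ d ∈ (G.addE u v hu hv huv).darts, (r' d).1 = d.1 := by
    intro d hd
    rw [hdarts] at hd
    rcases hd with rfl | rfl | hd
    · rw [hr'_e]
    · rw [hr'_e', R.fix dv hdv, hdv1]
    · by_cases h2 : d = dv
      · subst h2; rw [hr'_dv, he'_def, hdv1]
      · rw [hr'_other d h2 (fun h => he_not (h ▸ hd)) (fun h => he'_not (h ▸ hd)),
          R.fix d hd]
  have hdartsAt_u : ∀ d ∈ (G.addE u v hu hv huv).darts, d.1 = u → d = e := by
    intro d hd h1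
    rw [hdarts] at hd
    rcases hd with rfl | rfl | hd
    · rfl
    · exact absurd (show v = u from h1) (Ne.symm huv)
    · exact absurd (FinGraph.hasDart_of_fst (G := G) hd) (h1 ▸ hdu')
  have hdartsAt_v : ∀ d ∈ (G.addE u v hu hv huv).darts, d.1 = v →
      d = e' ∨ d ∈ G.dartsAt v := by
    intro d hd h1
    rw [hdarts] at hd
    rcases hd with rfl | rfl | hd
    · exact absurd (show u = v from h1) huv
    · exact Or.inl rfl
    · exact Or.inr ⟨hd, h1⟩
  have hdartsAt_w : ∀ w, w ≠ u → w ≠ v → ∀ d ∈ (G.addE u v hu hv huv).darts, d.1 = w →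
      d ∈ G.dartsAt w := by
    intro w hw1 hw2 d hd h1
    rw [hdarts] at hd
    rcases hd with rfl | rfl | hd
    · exact absurd (show w = u from h1.symm) hw1
    · exact absurd (show w = v from h1.symm) hw2
    · exact ⟨hd, h1⟩
  have hsv_fin : (G.dartsAt v).Finite := G.dartsAt_finite v
  have hdv_at : dv ∈ G.dartsAt v := ⟨hdv, hdv1⟩
  have he'_not_at : e' ∉ G.dartsAt v := fun h => he'_not h.1
  have hfd_v : ∀ d ∈ G.dartsAt v, d ≠ dv → r' d = R.r d := by
    rintro d ⟨hd, hd1⟩ hdne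
    exact hr'_other d hdne (fun h => he_not (h ▸ hd)) (fun h => he'_not (h ▸ hd))
  have hcyc : ∀ d ∈ (G.addE u v hu hv huv).darts, ∀ d' ∈ (G.addE u v hu hv huv).darts,
      d.1 = d'.1 → ∃ n, r'^[n] d = d' := by
    intro d hd d' hd' hsame
    by_cases hw1 : d.1 = u
    · rw [hdartsAt_u d hd hw1, hdartsAt_u d' hd' (hsame ▸ hw1)]
      exact ⟨0, rfl⟩
    by_cases hw2 : d.1 = v
    · have horb_mem : ∀ x ∈ G.dartsAt v, dv ∈ orb R.r x := by
        rintro x ⟨hx, hx1⟩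
        obtain ⟨n, hn⟩ := R.cyc x hx dv hdv (by rw [hx1, hdv1])
        exact ⟨n, hn⟩
      have key : ∀ x ∈ G.dartsAt v, orb r' x = insert e' (orb R.r x) := by
        intro x hx
        exact ins_orb_of_mem hsv_fin (R.bijOn_dartsAt v) hdv_at he'_not_at hr'_dv
          (by rw [hr'_e']) hfd_v hx (horb_mem x hx)
      have keye : orb r' e' = insert e' (orb R.r dv) :=
        ins_orb_e hsv_fin (R.bijOn_dartsAt v) hdv_at he'_not_at hr'_dv
          (by rw [hr'_e']) hfd_v
      rcases hdartsAt_v d hd hw2 with rfl | hd_at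
      · rcases hdartsAt_v d' hd' (hsame ▸ hw2) with rfl | hd'_at
        · exact ⟨0, rfl⟩
        · have : d' ∈ orb r' e' := by
            rw [keye]
            obtain ⟨n, hn⟩ := R.cyc dv hdv d' hd'_at.1 (by rw [hdv1, hd'_at.2])
            exact Set.mem_insert_of_mem _ ⟨n, hn⟩
          exact this
      · rcases hdartsAt_v d' hd' (hsame ▸ hw2) with rfl | hd'_at
        · have : e' ∈ orb r' d := by rw [key d hd_at]; exact Set.mem_insert _ _
          exact this
        · have : d' ∈ orb r' d := by
            rw [key d hd_at]
            obtain ⟨n, hn⟩ := R.cyc d hd_at.1 d' hd'_at.1 (by rw [hd_at.2, hd'_at.2])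
            exact Set.mem_insert_of_mem _ ⟨n, hn⟩
          exact this
    · have hd_at := hdartsAt_w d.1 hw1 hw2 d hd rfl
      have hd'_at := hdartsAt_w d.1 hw1 hw2 d' hd' hsame.symm
      have hcongr : orb R.r d = orb r' d := by
        apply orb_congr (R.bijOn_dartsAt d.1).mapsTo _ hd_at
        rintro y ⟨hy, hy1⟩
        refine (hr'_other y (fun h => hw2 ?_) (fun h => he_not (h ▸ hy))
          (fun h => he'_not (h ▸ hy))).symm
        rw [← hy1, h, hdv1]
      obtain ⟨n, hn⟩ := R.cyc d hd_at.1 d' hd'_at.1 hsame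
      have : d' ∈ orb r' d := hcongr ▸ ⟨n, hn⟩
      exact this
  set R' : Rot (G.addE u v hu hv huv) :=
    { r := r'
      bij := by rw [hdarts]; exact hb2
      fix := hfix
      cyc := hcyc } with hR'
  refine ⟨R', ?_⟩
  -- faces
  set F : ℕ × ℕ → ℕ × ℕ := faceMap R with hF
  set B : ℕ × ℕ := Prod.swap dv with hB_def
  have hB : B ∈ D := FinGraph.swap_mem_darts hdv
  have hB_e : B ≠ e := fun h => he_not (h ▸ hB)
  have hB_e' : B ≠ e' := fun h => he'_not (h ▸ hB)
  set F' : ℕ × ℕ → ℕ × ℕ := faceMap R' with hF'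
  have hswapB : (B.2, B.1) = dv := by rw [hB_def]; exact Prod.mk.eta
  have hFB : F B = R.r dv := by
    show R.r (B.2, B.1) = R.r dv
    rw [hswapB]
  have hF'_B : F' B = e' := by
    show r' (B.2, B.1) = e'
    rw [hswapB, hr'_dv]
  have hF'_e : F' e = F B := by
    show r' (e.2, e.1) = F B
    rw [show (e.2, e.1) = e' from rfl, hr'_e', hFB]
  have hF'_e' : F' e' = e := by
    show r' (e'.2, e'.1) = e
    rw [show (e'.2, e'.1) = e from rfl, hr'_e]
  have hF'_other : ∀ d ∈ D, d ≠ B → F' d = F d := by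
    intro d hd h2
    show r' (d.2, d.1) = F d
    have hsw : (d.2, d.1) ∈ D := FinGraph.swap_mem_darts hd
    rw [hr'_other (d.2, d.1) ?_ (fun h => he_not (h ▸ hsw)) (fun h => he'_not (h ▸ hsw))]
    · rfl
    · intro h
      apply h2
      rw [hB_def, ← h]
      rfl
  set f1 : ℕ × ℕ → ℕ × ℕ := rIns F B e' with hf1
  have hf1_B : f1 B = e' := rIns_at _ _ _
  have hf1_e' : f1 e' = F B := rIns_new _ (Ne.symm hB_e')
  have hf1_other : ∀ d, d ≠ B → d ≠ e' → f1 d = F d := fun d h1 h2 => rIns_other _ h1 h2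
  have hn1 : (orbs f1 (insert e' D)).ncard = (orbs F D).ncard :=
    ins_ncard hDfin (faceMap_bijOn R) hB he'_not hf1_B hf1_e'
      (fun d hd h1 => hf1_other d h1 (fun h => he'_not (h ▸ hd)))
  have hb1f : Set.BijOn f1 (insert e' D) (insert e' D) :=
    ins_bijOn (faceMap_bijOn R) hB he'_not hf1_B hf1_e'
      (fun d hd h1 => hf1_other d h1 (fun h => he'_not (h ▸ hd)))
  have hn2 : (orbs F' (insert e (insert e' D))).ncard = (orbs f1 (insert e' D)).ncard := by
    refine ins_ncard (hDfin.insert e') hb1f (Set.mem_insert _ _) he_notI hF'_e' ?_ ?_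
    · rw [hF'_e, hf1_e']
    · rintro d (rfl | hd) h1
      · exact absurd rfl h1
      · by_cases h2 : d = B
        · subst h2; rw [hF'_B, hf1_B]
        · rw [hF'_other d hd h2, hf1_other d h2 (fun h => he'_not (h ▸ hd))]
  have hface : (orbs F' (G.addE u v hu hv huv).darts).ncard = (orbs F D).ncard := by
    rw [hdarts, hn2, hn1]
  -- counts
  have hm : ((G.addE u v hu hv huv).edges.card : ℤ) = G.edges.card + 1 := by
    exact_mod_cast FinGraph.addE_edges_card hne
  have hnn : (G.addE u v hu hv huv).verts.card = G.verts.card := rfl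
  have hnreach : ¬ G.Reach u v := fun h => hdu' (FinGraph.hasDart_of_reach h huv)
  have hcomp : G.compCount = (G.addE u v hu hv huv).compCount + 1 :=
    FinGraph.compCount_addE_of_not_reach hnreach
  have hisol : G.isolCount = (G.addE u v hu hv huv).isolCount + 1 :=
    FinGraph.isolCount_addE_left hdu' (by rw [← hdv1]; exact FinGraph.hasDart_of_fst hdv)
  rw [eulerVal_eq, eulerVal_eq, hface, hm, hnn,
    show orbs (faceMap R) G.darts = orbs F D from rfl]
  have h2 : (G.compCount : ℤ) = (G.addE u v hu hv huv).compCount + 1 := by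
    exact_mod_cast hcomp
  have h3 : (G.isolCount : ℤ) = (G.addE u v hu hv huv).isolCount + 1 := by
    exact_mod_cast hisol
  push_cast
  omega

end SurgeryIso
section SurgeryBoth

variable {G : FinGraph} {u v : ℕ} {hu : u ∈ G.verts} {hv : v ∈ G.verts} {huv : u ≠ v}

lemma surgeryBoth (hne : s(u, v) ∉ G.edges) (R : Rot G) (hdu' : ¬ G.HasDart u)
    (hdv' : ¬ G.HasDart v) :
    ∃ R' : Rot (G.addE u v hu hv huv), eulerVal _ R' = eulerVal G R := by
  classical
  set D := G.darts with hD
  have hDfin : D.Finite := G.darts_finite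
  set e : ℕ × ℕ := (u, v) with he_def
  set e' : ℕ × ℕ := (v, u) with he'_def
  have he_not : e ∉ D := fun h => hne h
  have he'_not : e' ∉ D := by
    intro h
    exact hne (by rwa [FinGraph.mem_darts_iff, Sym2.eq_swap] at h)
  have hee' : e ≠ e' := by
    intro h; exact huv (show u = v from congrArg Prod.fst h)
  set r' : ℕ × ℕ → ℕ × ℕ := fun d => if d = e then e else if d = e' then e' else R.r d
    with hr'
  have hr'_e : r' e = e := by simp [hr']
  have hr'_e' : r' e' = e' := by simp [hr', Ne.symm hee']
  have hr'_other : ∀ d, d ≠ e → d ≠ e' → r' d = R.r d := by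
    intro d h1 h2; simp only [hr']; rw [if_neg h1, if_neg h2]
  have he_notI : e ∉ insert e' D := by
    rintro (h | h)
    · exact hee' h
    · exact he_not h
  have hb1 : Set.BijOn (fun d => if d = e' then e' else R.r d) (insert e' D)
      (insert e' D) := by
    refine bijOn_insert_fixed R.bij he'_not (by simp) ?_
    intro d hd
    rw [if_neg (show d ≠ e' from fun h => he'_not (h ▸ hd))]
  have hb2 : Set.BijOn r' (insert e (insert e' D)) (insert e (insert e' D)) := by
    refine bijOn_insert_fixed hb1 he_notI hr'_e ?_
    intro d hd
    simp only [hr']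
    rw [if_neg (show d ≠ e from fun h => he_notI (by rw [← h]; exact hd))]
  have hdarts : (G.addE u v hu hv huv).darts = insert e (insert e' D) :=
    FinGraph.addE_darts
  have hfix : ∀ d ∈ (G.addE u v hu hv huv).darts, (r' d).1 = d.1 := by
    intro d hd
    rw [hdarts] at hd
    rcases hd with rfl | rfl | hd
    · rw [hr'_e]
    · rw [hr'_e']
    · rw [hr'_other d (fun h => he_not (h ▸ hd)) (fun h => he'_not (h ▸ hd)), R.fix d hd]
  have hcyc : ∀ d ∈ (G.addE u v hu hv huv).darts, ∀ d' ∈ (G.addE u v hu hv huv).darts,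
      d.1 = d'.1 → ∃ n, r'^[n] d = d' := by
    intro d hd d' hd' hsame
    have hcase : ∀ z ∈ (G.addE u v hu hv huv).darts, z = e ∨ z = e' ∨ z ∈ D := by
      intro z hz; rw [hdarts] at hz; exact hz
    rcases hcase d hd with rfl | rfl | hdD
    · rcases hcase d' hd' with rfl | rfl | hd'D
      · exact ⟨0, rfl⟩
      · exact absurd (show u = v from hsame) huv
      · exact absurd (FinGraph.hasDart_of_fst (G := G) hd'D)
          (by rw [← hsame]; exact hdu')
    · rcases hcase d' hd' with rfl | rfl | hd'D
      · exact absurd (show v = u from hsame) (Ne.symm huv)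
      · exact ⟨0, rfl⟩
      · exact absurd (FinGraph.hasDart_of_fst (G := G) hd'D)
          (by rw [← hsame]; exact hdv')
    · rcases hcase d' hd' with rfl | rfl | hd'D
      · exact absurd (FinGraph.hasDart_of_fst (G := G) hdD) (hsame ▸ hdu')
      · exact absurd (FinGraph.hasDart_of_fst (G := G) hdD) (hsame ▸ hdv')
      · have hd_at : d ∈ G.dartsAt d.1 := ⟨hdD, rfl⟩
        have hd'_at : d' ∈ G.dartsAt d.1 := ⟨hd'D, hsame.symm⟩
        have hcongr : orb R.r d = orb r' d := by
          apply orb_congr (R.bijOn_dartsAt d.1).mapsTo _ hd_at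
          rintro y ⟨hy, hy1⟩
          exact (hr'_other y (fun h => he_not (h ▸ hy)) (fun h => he'_not (h ▸ hy))).symm
        obtain ⟨n, hn⟩ := R.cyc d hdD d' hd'D hsame
        have : d' ∈ orb r' d := hcongr ▸ ⟨n, hn⟩
        exact this
  set R' : Rot (G.addE u v hu hv huv) :=
    { r := r'
      bij := by rw [hdarts]; exact hb2
      fix := hfix
      cyc := hcyc } with hR'
  refine ⟨R', ?_⟩
  set F : ℕ × ℕ → ℕ × ℕ := faceMap R with hF
  set F' : ℕ × ℕ → ℕ × ℕ := faceMap R' with hF'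
  have hF'_e : F' e = e' := by
    show r' (e.2, e.1) = e'
    rw [show (e.2, e.1) = e' from rfl, hr'_e']
  have hF'_e' : F' e' = e := by
    show r' (e'.2, e'.1) = e
    rw [show (e'.2, e'.1) = e from rfl, hr'_e]
  have hF'_other : ∀ d ∈ D, F' d = F d := by
    intro d hd
    show r' (d.2, d.1) = F d
    have hsw : (d.2, d.1) ∈ D := FinGraph.swap_mem_darts hd
    rw [hr'_other (d.2, d.1) (fun h => he_not (h ▸ hsw)) (fun h => he'_not (h ▸ hsw))]
    rfl
  have horb_e : orb F' e = {e, e'} := by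
    apply le_antisymm
    · rintro z ⟨n, rfl⟩
      induction n with
      | zero => exact Or.inl rfl
      | succ n ih =>
          rw [Function.iterate_succ_apply']
          rcases ih with h | h
          · rw [h, hF'_e]; exact Or.inr rfl
          · rw [h, hF'_e']; exact Or.inl rfl
    · rintro z (rfl | rfl)
      · exact ⟨0, rfl⟩
      · exact ⟨1, by simp [hF'_e]⟩
  have horb_e' : orb F' e' = {e, e'} := by
    apply le_antisymm
    · rintro z ⟨n, rfl⟩
      induction n with
      | zero => exact Or.inr rfl
      | succ n ih =>
          rw [Function.iterate_succ_apply']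
          rcases ih with h | h
          · rw [h, hF'_e]; exact Or.inr rfl
          · rw [h, hF'_e']; exact Or.inl rfl
    · rintro z (rfl | rfl)
      · exact ⟨1, by simp [hF'_e']⟩
      · exact ⟨0, rfl⟩
  have horb_D : ∀ d ∈ D, orb F' d = orb F d := by
    intro d hd
    exact (orb_congr (faceMap_bijOn R).mapsTo (fun y hy => (hF'_other y hy).symm) hd).symm
  have horbs : orbs F' (G.addE u v hu hv huv).darts = insert {e, e'} (orbs F D) := by
    rw [hdarts]
    ext S
    constructor
    · rintro ⟨x, hx, rfl⟩
      rcases hx with rfl | rfl | hx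
      · exact Or.inl horb_e
      · exact Or.inl horb_e'
      · exact Or.inr ⟨x, hx, horb_D x hx⟩
    · rintro (rfl | ⟨x, hx, rfl⟩)
      · exact ⟨e, Set.mem_insert _ _, horb_e.symm⟩
      · exact ⟨x, Set.mem_insert_of_mem _ (Set.mem_insert_of_mem _ hx),
          (horb_D x hx).symm⟩
  have hnotmem : ({e, e'} : Set (ℕ × ℕ)) ∉ orbs F D := by
    rintro ⟨x, hx, hEq⟩
    have : e ∈ orb F x := by rw [← hEq]; exact Or.inl rfl
    exact he_not (orb_subset (faceMap_bijOn R).mapsTo hx this)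
  have hface : (orbs F' (G.addE u v hu hv huv).darts).ncard = (orbs F D).ncard + 1 := by
    rw [horbs, Set.ncard_insert_of_notMem hnotmem (orbs_finite hDfin)]
  have hm : ((G.addE u v hu hv huv).edges.card : ℤ) = G.edges.card + 1 := by
    exact_mod_cast FinGraph.addE_edges_card hne
  have hnn : (G.addE u v hu hv huv).verts.card = G.verts.card := rfl
  have hnreach : ¬ G.Reach u v := fun h => hdu' (FinGraph.hasDart_of_reach h huv)
  have hcomp : (G.compCount : ℤ) = (G.addE u v hu hv huv).compCount + 1 := by
    exact_mod_cast FinGraph.compCount_addE_of_not_reach (hu := hu) (hv := hv) hnreach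
  have hisol : (G.isolCount : ℤ) = (G.addE u v hu hv huv).isolCount + 2 := by
    exact_mod_cast FinGraph.isolCount_addE_both (hu := hu) (hv := hv) (huv := huv) hdu' hdv'
  rw [eulerVal_eq, eulerVal_eq, hm, hnn,
    show orbs (faceMap R) G.darts = orbs F D from rfl]
  have hfaceZ : ((orbs F' (G.addE u v hu hv huv).darts).ncard : ℤ)
      = (orbs F D).ncard + 1 := by exact_mod_cast hface
  rw [show orbs (faceMap R') (G.addE u v hu hv huv).darts
      = orbs F' (G.addE u v hu hv huv).darts from rfl, hfaceZ]
  push_cast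
  omega

end SurgeryBoth
section Master

lemma surgery (G : FinGraph) (u v : ℕ) (hu : u ∈ G.verts) (hv : v ∈ G.verts) (huv : u ≠ v)
    (hne : s(u, v) ∉ G.edges) (R : Rot G) :
    ∃ R' : Rot (G.addE u v hu hv huv),
      (eulerVal _ R' = eulerVal G R ∨ eulerVal _ R' = eulerVal G R + 2) ∧
      ((∃ a ∈ G.darts, ∃ b ∈ G.darts, a.2 = u ∧ b.2 = v ∧ b ∈ orb (faceMap R) a) →
        eulerVal _ R' = eulerVal G R) := by
  by_cases hU : G.HasDart u
  · by_cases hV : G.HasDart v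
    · by_cases halt : ∃ a ∈ G.darts, ∃ b ∈ G.darts, a.2 = u ∧ b.2 = v ∧
        b ∈ orb (faceMap R) a
      · obtain ⟨a, ha, b, hb, ha2, hb2, hmem⟩ := halt
        obtain ⟨R', h1, h2, h3⟩ := surgeryNN (hu := hu) (hv := hv) (huv := huv) hne R
          (Prod.swap a) (Prod.swap b) (FinGraph.swap_mem_darts ha) (FinGraph.swap_mem_darts hb)
          ha2 hb2
        have hmem' : Prod.swap (Prod.swap b) ∈ orb (faceMap R) (Prod.swap (Prod.swap a)) := by
          rw [Prod.swap_swap, Prod.swap_swap]; exact hmem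
        exact ⟨R', Or.inl (h1 hmem'), fun _ => h1 hmem'⟩
      · obtain ⟨wu, hwu⟩ := hU
        obtain ⟨wv, hwv⟩ := hV
        obtain ⟨R', h1, h2, h3⟩ := surgeryNN (hu := hu) (hv := hv) (huv := huv) hne R
          (u, wu) (v, wv) hwu hwv rfl rfl
        refine ⟨R', ?_, fun h => absurd h halt⟩
        by_cases hmem : Prod.swap (v, wv) ∈ orb (faceMap R) (Prod.swap (u, wu))
        · exact Or.inl (h1 hmem)
        · by_cases hreach : G.Reach u v
          · exact Or.inr (h2 hmem hreach)
          · exact Or.inl (h3 hreach)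
    · have hcomm : G.addE u v hu hv huv = G.addE v u hv hu huv.symm := FinGraph.addE_comm
      have hne' : s(v, u) ∉ G.edges := by rwa [Sym2.eq_swap]
      obtain ⟨wu, hwu⟩ := hU
      rw [hcomm]
      obtain ⟨R', hval⟩ := surgeryIso (hu := hv) (hv := hu) (huv := huv.symm) hne' R hV
        (u, wu) hwu rfl
      exact ⟨R', Or.inl hval, fun _ => hval⟩
  · by_cases hV : G.HasDart v
    · obtain ⟨wv, hwv⟩ := hV
      obtain ⟨R', hval⟩ := surgeryIso (hu := hu) (hv := hv) (huv := huv) hne R hU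
        (v, wv) hwv rfl
      exact ⟨R', Or.inl hval, fun _ => hval⟩
    · obtain ⟨R', hval⟩ := surgeryBoth (hu := hu) (hv := hv) (huv := huv) hne R hU hV
      exact ⟨R', Or.inl hval, fun _ => hval⟩

lemma exists_eulerWitness : ∀ (n : ℕ) (G : FinGraph), G.edges.card = n →
    ∃ (R : Rot G) (k : ℕ), 2 * (k : ℤ) = eulerVal G R := by
  intro n
  induction n using Nat.strong_induction_on with
  | _ n ih =>
    intro G hcard
    rcases Nat.eq_zero_or_pos n with rfl | hpos
    · -- no edges
      have hempty : G.edges = ∅ := Finset.card_eq_zero.mp hcard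
      have hdarts : G.darts = ∅ := by
        ext p
        simp [FinGraph.darts, hempty]
      have R : Rot G :=
        { r := id
          bij := by rw [hdarts]; exact Set.bijOn_empty id
          fix := by intro d hd; rw [hdarts] at hd; exact absurd hd (Set.notMem_empty d)
          cyc := by intro d hd; rw [hdarts] at hd; exact absurd hd (Set.notMem_empty d) }
      refine ⟨R, 0, ?_⟩
      have horbs : orbs (faceMap R) G.darts = ∅ := by
        rw [hdarts]
        ext S
        simp [orbs]
      have hcset : ∀ v : ℕ, G.cset v = {v} := by
        intro v
        ext p
        simp only [FinGraph.cset, Set.mem_setOf_eq, Set.mem_singleton_iff]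
        constructor
        · intro h
          rcases Relation.ReflTransGen.cases_head h with rfl | ⟨c, hc, -⟩
          · rfl
          · exact absurd hc (by simp [FinGraph.Adj, hempty])
        · rintro rfl; exact Relation.ReflTransGen.refl
      have hcomp : G.compCount = G.verts.card := by
        rw [FinGraph.compCount_eq]
        rw [funext hcset]
        rw [Set.ncard_image_of_injective _ (fun a b h => by
          simpa using Set.singleton_eq_singleton_iff.mp h)]
        exact Set.ncard_coe_finset _
      have hisol : G.isolCount = G.verts.card := by
        unfold FinGraph.isolCount
        rw [Finset.filter_true_of_mem]
        intro w hw e he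
        rw [hempty] at he
        exact absurd he (Finset.notMem_empty e)
      rw [eulerVal_eq, horbs, hcomp, hisol, hcard]
      simp only [Set.ncard_empty, Nat.cast_zero, Nat.cast_ofNat]
      ring
    · -- at least one edge
      have hEne : G.edges.Nonempty := Finset.card_pos.mp (by omega)
      obtain ⟨E, hE⟩ := hEne
      induction E using Sym2.ind with
      | _ p q =>
        have hpq_ne : p ≠ q := by
          intro h
          exact G.loopless _ hE (by rw [h]; exact Sym2.mk_isDiag_iff.mpr rfl)
        have hp : p ∈ G.verts := G.edge_sub _ hE _ (Sym2.mem_mk_left _ _)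
        have hq : q ∈ G.verts := G.edge_sub _ hE _ (Sym2.mem_mk_right _ _)
        have hcard0 : (G.del p q).edges.card = n - 1 := by
          show (G.edges.erase s(p, q)).card = n - 1
          rw [Finset.card_erase_of_mem hE, hcard]
        obtain ⟨R0, k0, hk0⟩ := ih (n - 1) (by omega) (G.del p q) hcard0
        have hne0 : s(p, q) ∉ (G.del p q).edges := Finset.notMem_erase _ _
        have hEq : (G.del p q).addE p q hp hq hpq_ne = G := by
          apply FinGraph.ext'
          · rfl
          · show insert s(p, q) (G.edges.erase s(p, q)) = G.edges
            exact Finset.insert_erase hE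
        rw [← hEq]
        obtain ⟨R', hor, -⟩ := surgery (G.del p q) p q hp hq hpq_ne hne0 R0
        rcases hor with h | h
        · exact ⟨R', k0, by rw [h, ← hk0]⟩
        · refine ⟨R', k0 + 1, by rw [h, ← hk0]; push_cast; ring⟩

lemma genus_witness (G : FinGraph) : ∃ R : Rot G, 2 * (G.genus : ℤ) = eulerVal G R := by
  have hne : {k : ℕ | ∃ R : Rot G, 2 * (k : ℤ) = eulerVal G R}.Nonempty := by
    obtain ⟨R, k, h⟩ := exists_eulerWitness G.edges.card G rfl
    exact ⟨k, R, h⟩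
  exact Nat.sInf_mem hne

lemma genus_le {G : FinGraph} {k : ℕ} (h : ∃ R : Rot G, 2 * (k : ℤ) = eulerVal G R) :
    G.genus ≤ k :=
  Nat.sInf_le h

lemma corners_of_isAlt (G : TGraph) (R : Rot G.G) (h : IsAlt G R) :
    ∃ a ∈ G.G.darts, ∃ b ∈ G.G.darts, a.2 = G.x ∧ b.2 = G.y ∧ b ∈ orb (faceMap R) a := by
  obtain ⟨d, hd, hd1, i, j, k, hi, hij, hjk, hkp, hy1, hx1, hy2⟩ := h
  set F := faceMap R with hF
  set p := Function.minimalPeriod F d with hp_def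
  have hp_pos : 0 < p := by omega
  have hp : F^[p] d = d := Function.iterate_minimalPeriod
  have hmem : ∀ m : ℕ, F^[m] d ∈ G.G.darts :=
    fun m => iterate_mem (faceMap_bijOn R).mapsTo hd m
  refine ⟨F^[p - 1] d, hmem _, F^[i - 1] d, hmem _, ?_, ?_, ?_⟩
  · have h1 : (F (F^[p - 1] d)).1 = (F^[p - 1] d).2 := fst_faceMap R (hmem _)
    have h2 : F (F^[p - 1] d) = F^[p] d := by
      conv_rhs => rw [show p = (p - 1) + 1 by omega]
      rw [Function.iterate_succ_apply']
    rw [h2, hp, hd1] at h1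
    exact h1.symm
  · have h1 : (F (F^[i - 1] d)).1 = (F^[i - 1] d).2 := fst_faceMap R (hmem _)
    have h2 : F (F^[i - 1] d) = F^[i] d := by
      conv_rhs => rw [show i = (i - 1) + 1 by omega]
      rw [Function.iterate_succ_apply']
    rw [h2, hy1] at h1
    exact h1.symm
  · refine ⟨i, ?_⟩
    rw [← Function.iterate_add_apply]
    have : i + (p - 1) = (i - 1) + p := by omega
    rw [this, Function.iterate_add_apply, hp]

lemma plus_eq_addE (G : TGraph) : G.plus.G = G.G.addE G.x G.y G.hx G.hy G.hxy :=
  FinGraph.ext' rfl rfl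

lemma epsP_nonneg (G : TGraph) : 0 ≤ epsP G := by
  unfold epsP; split_ifs <;> norm_num

lemma epsP_le_one (G : TGraph) : epsP G ≤ 1 := by
  unfold epsP; split_ifs <;> norm_num

end Master
/-- Lemma (lm-galt-gp-sep): g⁺(G) ≤ g_a(G) + 1. -/
theorem gpP_le_gaP_add_one (G : TGraph) : gpP G ≤ gaP G + 1 := by
  by_cases hxy : G.HasXY
  · have hplus : G.plus.G = G.G :=
      FinGraph.ext' rfl (Finset.insert_eq_self.mpr hxy)
    have heps := epsP_le_one G
    unfold gpP gaP gP
    rw [hplus]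
    linarith
  · have hplus : G.plus.G = G.G.addE G.x G.y G.hx G.hy G.hxy := plus_eq_addE G
    have hnexy : s(G.x, G.y) ∉ G.G.edges := hxy
    by_cases halt : IsXYAlt G
    · obtain ⟨R, hmin, hAlt⟩ := halt
      obtain ⟨R', -, hexact⟩ := surgery G.G G.x G.y G.hx G.hy G.hxy hnexy R
      have hcor := corners_of_isAlt G R hAlt
      have hle : G.plus.G.genus ≤ G.G.genus := by
        rw [hplus]
        exact genus_le ⟨R', by rw [hexact hcor]; exact hmin⟩
      have heps1 : epsP G = 1 := by unfold epsP; rw [if_pos ⟨R, hmin, hAlt⟩]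
      have hleZ : (G.plus.G.genus : ℤ) ≤ (G.G.genus : ℤ) := by exact_mod_cast hle
      unfold gpP gaP gP
      rw [heps1]
      linarith
    · obtain ⟨R, hmin⟩ := genus_witness G.G
      obtain ⟨R', hor, -⟩ := surgery G.G G.x G.y G.hx G.hy G.hxy hnexy R
      have hle : G.plus.G.genus ≤ G.G.genus + 1 := by
        rw [hplus]
        rcases hor with h | h
        · exact le_trans (genus_le ⟨R', by rw [h]; exact hmin⟩) (Nat.le_succ _)
        · exact genus_le ⟨R', by rw [h, ← hmin]; push_cast; ring⟩
      have heps0 : epsP G = 0 := by unfold epsP; rw [if_neg halt]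
      have hleZ : (G.plus.G.genus : ℤ) ≤ (G.G.genus : ℤ) + 1 := by exact_mod_cast hle
      unfold gpP gaP gP
      rw [heps0]
      linarith
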